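/- Let Q be a seminormal quasi-crystal. The hypoplactic congruence ∼̈ on F^⊗̈(Q) is a monoid congruence on the free monoid Q*: it is an equivalence relation on Q*, and for all u, v, u', v' ∈ Q*, if u ∼̈ v and u' ∼̈ v' then uu' ∼̈ vv'. -/

import Mathlib

/-! ## Root system setting -/

/-- The data of a root system `Φ` in a Euclidean space `V`, together with a choice of
simple roots `(α_i)_{i ∈ ι}` and a weight lattice `Λ`, with the integer-valued coroot
pairing `pair λ i = ⟨λ, α_i^∨⟩ = 2⟪λ, α_i⟫/⟪α_i, α_i⟫` on the weight lattice. -/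
structure QCSetting (V : Type*) [NormedAddCommGroup V] [InnerProductSpace ℝ V]
    (ι : Type*) where
  Φ : Set V
  finite : Φ.Finite
  nonempty : Φ.Nonempty
  zero_not_mem : (0 : V) ∉ Φ
  reflect_mem : ∀ a ∈ Φ, ∀ b ∈ Φ, b - (2 * (inner ℝ b a : ℝ) / (inner ℝ a a : ℝ)) • a ∈ Φ
  smul_root : ∀ a ∈ Φ, ∀ k : ℝ, k • a ∈ Φ → k = 1 ∨ k = -1
  simple : ι → V
  simple_mem : ∀ i, simple i ∈ Φ
  simple_indep : LinearIndependent ℝ simple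
  Λ : AddSubgroup V
  lattice_spans : Submodule.span ℝ (Λ : Set V) = ⊤
  root_mem_lattice : ∀ a ∈ Φ, a ∈ Λ
  pair : Λ → ι → ℤ
  pair_spec : ∀ (v : Λ) (i : ι),
    (pair v i : ℝ) = 2 * (inner ℝ (v : V) (simple i) : ℝ) / (inner ℝ (simple i) (simple i) : ℝ)

variable {V : Type*} [NormedAddCommGroup V] [InnerProductSpace ℝ V] {ι : Type*}

/-! ## Quasi-crystals -/

/-- The structure maps of a quasi-crystal of type `S` on an underlying set `Q`:
a weight map `wt` with values in the weight lattice, partial quasi-Kashiwara operators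
`e i, f i : Q → Q ⊔ {⊥}` (realized as `Option`-valued maps, `none` playing the role
of `⊥`), and maps `ε i, φ i : Q → ℤ ∪ {+∞}` (realized as `WithTop ℤ`). -/
structure QC (S : QCSetting V ι) (Q : Type*) where
  wt : Q → S.Λ
  e : ι → Q → Option Q
  f : ι → Q → Option Q
  ε : ι → Q → WithTop ℤ
  φ : ι → Q → WithTop ℤ

/-- `k`-fold iteration of a partial map `g : Q → Option Q` starting at `x`. -/
def optIter {Q : Type*} (g : Q → Option Q) (k : ℕ) (x : Q) : Option Q :=
  (fun o => o.bind g)^[k] (some x)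

/-- The axioms of a seminormal quasi-crystal. -/
structure QC.IsSeminormal {S : QCSetting V ι} {Q : Type*} (𝒬 : QC S Q) : Prop where
  phi_eq : ∀ i x, 𝒬.φ i x = 𝒬.ε i x + ((S.pair (𝒬.wt x) i : ℤ) : WithTop ℤ)
  wt_e : ∀ i x y, 𝒬.e i x = some y → (𝒬.wt y : V) = (𝒬.wt x : V) + S.simple i
  wt_f : ∀ i x y, 𝒬.f i x = some y → (𝒬.wt y : V) = (𝒬.wt x : V) - S.simple i
  e_iff_f : ∀ i x y, 𝒬.e i x = some y ↔ 𝒬.f i y = some x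
  e_of_top : ∀ i x, 𝒬.ε i x = ⊤ → 𝒬.e i x = none
  f_of_top : ∀ i x, 𝒬.ε i x = ⊤ → 𝒬.f i x = none
  eps_spec : ∀ i x, 𝒬.ε i x ≠ ⊤ → ∃ n : ℕ, 𝒬.ε i x = ((n : ℤ) : WithTop ℤ) ∧
    IsGreatest {k : ℕ | (optIter (𝒬.e i) k x).isSome} n
  phi_spec : ∀ i x, 𝒬.ε i x ≠ ⊤ → ∃ n : ℕ, 𝒬.φ i x = ((n : ℤ) : WithTop ℤ) ∧
    IsGreatest {k : ℕ | (optIter (𝒬.f i) k x).isSome} n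

/-- A seminormal crystal is a seminormal quasi-crystal in which `ε i x ≠ +∞` always. -/
def QC.IsSeminormalCrystal {S : QCSetting V ι} {Q : Type*} (𝒬 : QC S Q) : Prop :=
  𝒬.IsSeminormal ∧ ∀ i x, 𝒬.ε i x ≠ ⊤

/-! ## Tensor product -/

/-- The tensor product of two quasi-crystals of the same type. -/
noncomputable def QC.tensor {S : QCSetting V ι} {Q Q' : Type*} (𝒬 : QC S Q) (𝒬' : QC S Q') :
    QC S (Q × Q') where
  wt p := 𝒬.wt p.1 + 𝒬'.wt p.2
  ε i p := max (𝒬.ε i p.1) (𝒬'.ε i p.2 + ((-(S.pair (𝒬.wt p.1) i) : ℤ) : WithTop ℤ))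
  φ i p := max (𝒬.φ i p.1 + ((S.pair (𝒬'.wt p.2) i : ℤ) : WithTop ℤ)) (𝒬'.φ i p.2)
  e i p := if 𝒬'.ε i p.2 ≤ 𝒬.φ i p.1
    then (𝒬.e i p.1).map (fun y => (y, p.2))
    else (𝒬'.e i p.2).map (fun y => (p.1, y))
  f i p := if 𝒬'.ε i p.2 < 𝒬.φ i p.1
    then (𝒬.f i p.1).map (fun y => (y, p.2))
    else (𝒬'.f i p.2).map (fun y => (p.1, y))

/-! ## Quasi-tensor product -/

/-- The (inverse-free) quasi-tensor product of two quasi-crystals of the same type. -/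
noncomputable def QC.qtensor {S : QCSetting V ι} {Q Q' : Type*} (𝒬 : QC S Q) (𝒬' : QC S Q') :
    QC S (Q × Q') where
  wt p := 𝒬.wt p.1 + 𝒬'.wt p.2
  ε i p := if 0 < 𝒬.φ i p.1 ∧ 0 < 𝒬'.ε i p.2 then ⊤
    else max (𝒬.ε i p.1) (𝒬'.ε i p.2 + ((-(S.pair (𝒬.wt p.1) i) : ℤ) : WithTop ℤ))
  φ i p := if 0 < 𝒬.φ i p.1 ∧ 0 < 𝒬'.ε i p.2 then ⊤
    else max (𝒬.φ i p.1 + ((S.pair (𝒬'.wt p.2) i : ℤ) : WithTop ℤ)) (𝒬'.φ i p.2)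
  e i p := if 0 < 𝒬.φ i p.1 ∧ 0 < 𝒬'.ε i p.2 then none
    else if 𝒬'.ε i p.2 ≤ 𝒬.φ i p.1 then (𝒬.e i p.1).map (fun y => (y, p.2))
    else (𝒬'.e i p.2).map (fun y => (p.1, y))
  f i p := if 0 < 𝒬.φ i p.1 ∧ 0 < 𝒬'.ε i p.2 then none
    else if 𝒬'.ε i p.2 < 𝒬.φ i p.1 then (𝒬.f i p.1).map (fun y => (y, p.2))
    else (𝒬'.f i p.2).map (fun y => (p.1, y))

/-! ## Homomorphisms -/

/-- A quasi-crystal homomorphism `ψ : 𝒬 → 𝒬'`, i.e. a map `Q ⊔ {⊥} → Q' ⊔ {⊥}`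
(realized on `Option`s, `none` playing the role of `⊥`) compatible with the structure
maps in the appropriate sense. -/
structure QCHom {S : QCSetting V ι} {Q Q' : Type*} (𝒬 : QC S Q) (𝒬' : QC S Q') where
  toFun : Option Q → Option Q'
  map_none : toFun none = none
  wt_eq : ∀ x y, toFun (some x) = some y → 𝒬'.wt y = 𝒬.wt x
  eps_eq : ∀ i x y, toFun (some x) = some y → 𝒬'.ε i y = 𝒬.ε i x
  phi_eq : ∀ i x y, toFun (some x) = some y → 𝒬'.φ i y = 𝒬.φ i x
  comm_e : ∀ i x x' y y', 𝒬.e i x = some x' → toFun (some x) = some y →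
    toFun (some x') = some y' → 𝒬'.e i y = some y'
  comm_f : ∀ i x x' y y', 𝒬.f i x = some x' → toFun (some x) = some y →
    toFun (some x') = some y' → 𝒬'.f i y = some y'

/-! ## The free `⊗`-quasi-crystal monoid -/

/-- Weight of a word: the sum of the weights of its letters. -/
def freeWt {S : QCSetting V ι} {Q : Type*} (𝒬 : QC S Q) : List Q → S.Λ
  | [] => 0
  | x :: w => 𝒬.wt x + freeWt 𝒬 w

/-- The map `ε̈_i` of the free `⊗`-quasi-crystal monoid. -/
def freeEps {S : QCSetting V ι} {Q : Type*} (𝒬 : QC S Q) (i : ι) : List Q → WithTop ℤ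
  | [] => 0
  | x :: w => max (𝒬.ε i x) (freeEps 𝒬 i w + ((-(S.pair (𝒬.wt x) i) : ℤ) : WithTop ℤ))

/-- The map `φ̈_i` of the free `⊗`-quasi-crystal monoid. -/
def freePhi {S : QCSetting V ι} {Q : Type*} (𝒬 : QC S Q) (i : ι) : List Q → WithTop ℤ
  | [] => 0
  | x :: w => max (𝒬.φ i x + ((S.pair (freeWt 𝒬 w) i : ℤ) : WithTop ℤ)) (freePhi 𝒬 i w)

/-- The operator `ë_i` of the free `⊗`-quasi-crystal monoid. -/
noncomputable def freeE {S : QCSetting V ι} {Q : Type*} (𝒬 : QC S Q) (i : ι) : List Q → Option (List Q)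
  | [] => none
  | x :: w => if freeEps 𝒬 i w ≤ 𝒬.φ i x
      then (𝒬.e i x).map (· :: w)
      else (freeE 𝒬 i w).map (x :: ·)

/-- The operator `f̈_i` of the free `⊗`-quasi-crystal monoid. -/
noncomputable def freeF {S : QCSetting V ι} {Q : Type*} (𝒬 : QC S Q) (i : ι) : List Q → Option (List Q)
  | [] => none
  | x :: w => if freeEps 𝒬 i w < 𝒬.φ i x
      then (𝒬.f i x).map (· :: w)
      else (freeF 𝒬 i w).map (x :: ·)

/-- The quasi-crystal structure of the free `⊗`-quasi-crystal monoid `F^⊗(𝒬)`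
on the free monoid `Q*`. -/
noncomputable def freeTensorQC {S : QCSetting V ι} {Q : Type*} (𝒬 : QC S Q) : QC S (FreeMonoid Q) where
  wt w := freeWt 𝒬 (FreeMonoid.toList w)
  ε i w := freeEps 𝒬 i (FreeMonoid.toList w)
  φ i w := freePhi 𝒬 i (FreeMonoid.toList w)
  e i w := (freeE 𝒬 i (FreeMonoid.toList w)).map (fun l => FreeMonoid.ofList l)
  f i w := (freeF 𝒬 i (FreeMonoid.toList w)).map (fun l => FreeMonoid.ofList l)

/-! ## The free `⊗̈`-quasi-crystal monoid -/

/-- The map `ε̈_i` of the free `⊗̈`-quasi-crystal monoid. -/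
noncomputable def qfreeEps {S : QCSetting V ι} {Q : Type*} (𝒬 : QC S Q) (i : ι) : List Q → WithTop ℤ
  | [] => 0
  | x :: w => if 0 < 𝒬.φ i x ∧ 0 < qfreeEps 𝒬 i w then ⊤
      else max (𝒬.ε i x) (qfreeEps 𝒬 i w + ((-(S.pair (𝒬.wt x) i) : ℤ) : WithTop ℤ))

/-- The map `φ̈_i` of the free `⊗̈`-quasi-crystal monoid. -/
noncomputable def qfreePhi {S : QCSetting V ι} {Q : Type*} (𝒬 : QC S Q) (i : ι) : List Q → WithTop ℤ
  | [] => 0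
  | x :: w => if 0 < 𝒬.φ i x ∧ 0 < qfreeEps 𝒬 i w then ⊤
      else max (𝒬.φ i x + ((S.pair (freeWt 𝒬 w) i : ℤ) : WithTop ℤ)) (qfreePhi 𝒬 i w)

/-- The operator `ë_i` of the free `⊗̈`-quasi-crystal monoid. -/
noncomputable def qfreeE {S : QCSetting V ι} {Q : Type*} (𝒬 : QC S Q) (i : ι) : List Q → Option (List Q)
  | [] => none
  | x :: w => if 0 < 𝒬.φ i x ∧ 0 < qfreeEps 𝒬 i w then none
      else if qfreeEps 𝒬 i w ≤ 𝒬.φ i x then (𝒬.e i x).map (· :: w)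
      else (qfreeE 𝒬 i w).map (x :: ·)

/-- The operator `f̈_i` of the free `⊗̈`-quasi-crystal monoid. -/
noncomputable def qfreeF {S : QCSetting V ι} {Q : Type*} (𝒬 : QC S Q) (i : ι) : List Q → Option (List Q)
  | [] => none
  | x :: w => if 0 < 𝒬.φ i x ∧ 0 < qfreeEps 𝒬 i w then none
      else if qfreeEps 𝒬 i w < 𝒬.φ i x then (𝒬.f i x).map (· :: w)
      else (qfreeF 𝒬 i w).map (x :: ·)

/-- The quasi-crystal structure of the free `⊗̈`-quasi-crystal monoid `F^⊗̈(𝒬)`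
on the free monoid `Q*`. -/
noncomputable def freeQTensorQC {S : QCSetting V ι} {Q : Type*} (𝒬 : QC S Q) : QC S (FreeMonoid Q) where
  wt w := freeWt 𝒬 (FreeMonoid.toList w)
  ε i w := qfreeEps 𝒬 i (FreeMonoid.toList w)
  φ i w := qfreePhi 𝒬 i (FreeMonoid.toList w)
  e i w := (qfreeE 𝒬 i (FreeMonoid.toList w)).map (fun l => FreeMonoid.ofList l)
  f i w := (qfreeF 𝒬 i (FreeMonoid.toList w)).map (fun l => FreeMonoid.ofList l)

/-! ## Connected components, plactic and hypoplactic congruences -/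

/-- Two elements are connected in the quasi-crystal graph if they are related by the
reflexive-symmetric-transitive closure of the edge relation given by the
quasi-Kashiwara operators. -/
def QC.conn {S : QCSetting V ι} {Q : Type*} (𝒬 : QC S Q) : Q → Q → Prop :=
  Relation.EqvGen (fun x y => ∃ i, 𝒬.f i x = some y ∨ 𝒬.f i y = some x ∨
    𝒬.e i x = some y ∨ 𝒬.e i y = some x)

/-- The connected component `𝒬(x)` of a quasi-crystal `𝒬` containing `x`, as a
quasi-crystal on the subtype of elements connected with `x`. -/
def QC.compQC {S : QCSetting V ι} {Q : Type*} (𝒬 : QC S Q) (x : Q) :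
    QC S {y : Q // 𝒬.conn x y} where
  wt y := 𝒬.wt y.1
  ε i y := 𝒬.ε i y.1
  φ i y := 𝒬.φ i y.1
  e i y := (𝒬.e i y.1).pmap (fun z hz => (⟨z, hz⟩ : {y : Q // 𝒬.conn x y}))
    (fun z hz => Relation.EqvGen.trans _ _ _ y.2
      (Relation.EqvGen.rel _ _ ⟨i, Or.inr (Or.inr (Or.inl hz))⟩))
  f i y := (𝒬.f i y.1).pmap (fun z hz => (⟨z, hz⟩ : {y : Q // 𝒬.conn x y}))
    (fun z hz => Relation.EqvGen.trans _ _ _ y.2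
      (Relation.EqvGen.rel _ _ ⟨i, Or.inl hz⟩))

/-- The plactic congruence: `u ≈ v` iff there is a quasi-crystal isomorphism between the
connected components of `u` and `v` in `F^⊗(𝒬)` mapping `u` to `v`. -/
def placticRel {S : QCSetting V ι} {Q : Type*} (𝒬 : QC S Q)
    (u v : FreeMonoid Q) : Prop :=
  ∃ ψ : QCHom ((freeTensorQC 𝒬).compQC u) ((freeTensorQC 𝒬).compQC v),
    Function.Bijective ψ.toFun ∧
    ψ.toFun (some ⟨u, Relation.EqvGen.refl u⟩) = some ⟨v, Relation.EqvGen.refl v⟩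

/-- The hypoplactic congruence: `u ∼̈ v` iff there is a quasi-crystal isomorphism between
the connected components of `u` and `v` in `F^⊗̈(𝒬)` mapping `u` to `v`. -/
def hypoRel {S : QCSetting V ι} {Q : Type*} (𝒬 : QC S Q)
    (u v : FreeMonoid Q) : Prop :=
  ∃ ψ : QCHom ((freeQTensorQC 𝒬).compQC u) ((freeQTensorQC 𝒬).compQC v),
    Function.Bijective ψ.toFun ∧
    ψ.toFun (some ⟨u, Relation.EqvGen.refl u⟩) = some ⟨v, Relation.EqvGen.refl v⟩

/-! ## Quasi-crystal monoids -/

/-- A monoid is equidivisible if whenever `x₁y₁ = x₂y₂` one of the factorizations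
refines the other. -/
def Equidivisible (M : Type*) [Monoid M] : Prop :=
  ∀ x₁ x₂ y₁ y₂ : M, x₁ * y₁ = x₂ * y₂ →
    ∃ z : M, (x₂ = x₁ * z ∧ y₁ = z * y₂) ∨ (x₁ = x₂ * z ∧ y₂ = z * y₁)

/-- A `⊗`-quasi-crystal monoid: a seminormal quasi-crystal structure on a monoid whose
structure maps interact with the multiplication by the tensor-product rules. -/
structure IsTensorQCMon {S : QCSetting V ι} {M : Type*} [Monoid M] (𝒬 : QC S M) : Prop where
  seminormal : 𝒬.IsSeminormal
  wt_mul : ∀ x y, 𝒬.wt (x * y) = 𝒬.wt x + 𝒬.wt y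
  eps_mul : ∀ i x y, 𝒬.ε i (x * y) =
    max (𝒬.ε i x) (𝒬.ε i y + ((-(S.pair (𝒬.wt x) i) : ℤ) : WithTop ℤ))
  phi_mul : ∀ i x y, 𝒬.φ i (x * y) =
    max (𝒬.φ i x + ((S.pair (𝒬.wt y) i : ℤ) : WithTop ℤ)) (𝒬.φ i y)
  e_mul : ∀ i x y, 𝒬.e i (x * y) =
    if 𝒬.ε i y ≤ 𝒬.φ i x then (𝒬.e i x).map (· * y) else (𝒬.e i y).map (x * ·)
  f_mul : ∀ i x y, 𝒬.f i (x * y) =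
    if 𝒬.ε i y < 𝒬.φ i x then (𝒬.f i x).map (· * y) else (𝒬.f i y).map (x * ·)

/-- A `⊗̈`-quasi-crystal monoid: a seminormal quasi-crystal structure on a monoid such
that `x ⊗̈ y ↦ x·y` induces a quasi-crystal homomorphism `M ⊗̈ M → M`. -/
def IsQTensorQCMon {S : QCSetting V ι} {M : Type*} [Monoid M] (𝒬 : QC S M) : Prop :=
  𝒬.IsSeminormal ∧
  ∃ ψ : QCHom (𝒬.qtensor 𝒬) 𝒬, ψ.toFun = Option.map (fun p => p.1 * p.2)

/-! ## The bicyclic monoid with zero `B₀` and the monoid `Z₀` -/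

/-- The bicyclic monoid `⟨−, + | (+)(−) = ε⟩`: elements are normal forms `(−)^a(+)^b`. -/
structure Bic where
  neg : ℕ
  pos : ℕ
deriving DecidableEq

instance : Mul Bic :=
  ⟨fun x y => ⟨x.neg + (y.neg - x.pos), y.pos + (x.pos - y.neg)⟩⟩

theorem Bic.mul_def (x y : Bic) :
    x * y = ⟨x.neg + (y.neg - x.pos), y.pos + (x.pos - y.neg)⟩ := rfl

instance : One Bic := ⟨⟨0, 0⟩⟩

theorem Bic.one_def : (1 : Bic) = ⟨0, 0⟩ := rfl

instance : Monoid Bic where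
  mul_assoc x y z := by
    simp only [Bic.mul_def, Bic.mk.injEq]
    omega
  one_mul x := by
    simp only [Bic.one_def, Bic.mul_def]
    cases x
    simp only [Bic.mk.injEq]
    omega
  mul_one x := by
    simp only [Bic.one_def, Bic.mul_def]
    cases x
    simp only [Bic.mk.injEq]
    omega

/-- The bicyclic monoid with a zero element adjoined,
`B₀ = ⟨0, −, + | (+)(−) = ε, 0x = x0 = 0⟩`. -/
abbrev B0 : Type := WithZero Bic

/-- The monoid `Z₀ = ⟨0, −, + | (+)(−) = 0, 0x = x0 = 0⟩`: the nonzero elements are the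
normal forms `(−)^a(+)^b`. -/
inductive Z0 : Type
  | zero : Z0
  | word : ℕ → ℕ → Z0
deriving DecidableEq

instance : Mul Z0 :=
  ⟨fun x y => match x, y with
    | Z0.zero, _ => Z0.zero
    | _, Z0.zero => Z0.zero
    | Z0.word a b, Z0.word c d =>
        if 0 < b ∧ 0 < c then Z0.zero else Z0.word (a + c) (b + d)⟩

instance : One Z0 := ⟨Z0.word 0 0⟩

instance : Zero Z0 := ⟨Z0.zero⟩

theorem Z0.one_def : (1 : Z0) = Z0.word 0 0 := rfl
theorem Z0.zero_def : (0 : Z0) = Z0.zero := rfl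
theorem Z0.zero_mul' (x : Z0) : Z0.zero * x = Z0.zero := by cases x <;> rfl
theorem Z0.mul_zero' (x : Z0) : x * Z0.zero = Z0.zero := by cases x <;> rfl
theorem Z0.word_mul_word (a b c d : ℕ) :
    Z0.word a b * Z0.word c d =
      if 0 < b ∧ 0 < c then Z0.zero else Z0.word (a + c) (b + d) := rfl

instance : MonoidWithZero Z0 where
  mul_assoc x y z := by
    cases x <;> cases y <;> cases z <;>
      simp only [Z0.zero_mul', Z0.mul_zero', Z0.word_mul_word]
    · split_ifs <;> simp_all [Z0.zero_mul', Z0.mul_zero', Z0.word_mul_word] <;>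
        split_ifs <;> simp_all <;> omega
  one_mul x := by
    cases x
    · rfl
    · simp [Z0.one_def, Z0.word_mul_word]
  mul_one x := by
    cases x
    · rfl
    · simp [Z0.one_def, Z0.word_mul_word]
  zero_mul x := by cases x <;> rfl
  mul_zero x := by cases x <;> rfl

/-! ## Signature maps -/

/-- The `i`-signature map for the tensor product `⊗`:
`sgn_i^⊗(w) = 0` if `ε̈_i(w) = +∞`, and `(−)^{ε̈_i(w)}(+)^{φ̈_i(w)}` otherwise. -/
noncomputable def tsgn {V : Type*} [NormedAddCommGroup V] [InnerProductSpace ℝ V] {ι : Type*}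
    {S : QCSetting V ι} {Q : Type*} (𝒬 : QC S Q) (i : ι) (w : FreeMonoid Q) : B0 :=
  if freeEps 𝒬 i (FreeMonoid.toList w) = ⊤ then 0
  else ↑(Bic.mk (WithTop.untopD 0 (freeEps 𝒬 i (FreeMonoid.toList w))).toNat
      (WithTop.untopD 0 (freePhi 𝒬 i (FreeMonoid.toList w))).toNat)

/-- The `i`-signature map for the quasi-tensor product `⊗̈`:
`sgn_i^⊗̈(w) = 0` if `ε̈_i(w) = +∞`, and `(−)^{ε̈_i(w)}(+)^{φ̈_i(w)}` otherwise. -/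
noncomputable def qsgn {V : Type*} [NormedAddCommGroup V] [InnerProductSpace ℝ V] {ι : Type*}
    {S : QCSetting V ι} {Q : Type*} (𝒬 : QC S Q) (i : ι) (w : FreeMonoid Q) : Z0 :=
  if qfreeEps 𝒬 i (FreeMonoid.toList w) = ⊤ then 0
  else Z0.word (WithTop.untopD 0 (qfreeEps 𝒬 i (FreeMonoid.toList w))).toNat
      (WithTop.untopD 0 (qfreePhi 𝒬 i (FreeMonoid.toList w))).toNat

/-! ## Auxiliary lemmas -/

section WithTopHelpers

lemma wt_shift_le (a b : WithTop ℤ) (c : ℤ) : a + ↑c ≤ b + ↑c ↔ a ≤ b :=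
  WithTop.add_le_add_iff_right (WithTop.coe_ne_top)

lemma wt_shift_lt (a b : WithTop ℤ) (c : ℤ) : a + ↑c < b + ↑c ↔ a < b :=
  WithTop.add_lt_add_iff_right (WithTop.coe_ne_top)

lemma wt_add_coe (a : WithTop ℤ) (b c : ℤ) : a + ↑b + ↑c = a + ↑(b + c) := by
  rw [add_assoc]; norm_cast

lemma wt_cancel (a : WithTop ℤ) (c : ℤ) : a + ↑c + ↑(-c) = a := by
  rw [wt_add_coe]; simp

lemma wt_max_add (a b : WithTop ℤ) (c : ℤ) : max a b + ↑c = max (a + ↑c) (b + ↑c) :=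
  (max_add_add_right a b (↑c)).symm

lemma wt_eq_zero_of (a : WithTop ℤ) (h0 : 0 ≤ a) (h : ¬ 0 < a) : a = 0 :=
  le_antisymm (not_lt.mp h) h0

end WithTopHelpers

section OptIter

lemma optIter_succ {Q' : Type*} (g : Q' → Option Q') (k : ℕ) (x : Q') :
    optIter g (k+1) x = (optIter g k x).bind g := by
  unfold optIter; rw [Function.iterate_succ_apply']

lemma optIter_one {Q' : Type*} (g : Q' → Option Q') (x : Q') : optIter g 1 x = g x := by
  unfold optIter; simp

lemma optIter_isSome_mono {Q' : Type*} (g : Q' → Option Q') {j k : ℕ} (hjk : j ≤ k) {x : Q'}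
    (hk : (optIter g k x).isSome) : (optIter g j x).isSome := by
  induction k with
  | zero => exact (Nat.le_zero.mp hjk) ▸ hk
  | succ k ih =>
      rcases Nat.lt_or_ge j (k+1) with hj | hj
      · refine ih (Nat.lt_succ_iff.mp hj) ?_
        rw [optIter_succ] at hk
        cases ho : optIter g k x with
        | none => rw [ho] at hk; simp at hk
        | some y => simp
      · have hj' : j = k+1 := le_antisymm hjk hj
        exact hj' ▸ hk

end OptIter

section Letter

variable {V : Type*} [NormedAddCommGroup V] [InnerProductSpace ℝ V] {ι : Type*}
  {S : QCSetting V ι} {Q : Type*} {𝒬 : QC S Q}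

lemma eps_nonneg (h : 𝒬.IsSeminormal) (i : ι) (x : Q) : 0 ≤ 𝒬.ε i x := by
  by_cases ht : 𝒬.ε i x = ⊤
  · rw [ht]; exact le_top
  · obtain ⟨n, hn, -⟩ := h.eps_spec i x ht
    rw [hn]; exact_mod_cast Int.natCast_nonneg n

lemma phi_top_iff (h : 𝒬.IsSeminormal) (i : ι) (x : Q) : 𝒬.φ i x = ⊤ ↔ 𝒬.ε i x = ⊤ := by
  constructor
  · intro hp; by_contra ht
    obtain ⟨n, hn, -⟩ := h.phi_spec i x ht
    rw [hn] at hp; exact WithTop.coe_ne_top hp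
  · intro ht; rw [h.phi_eq, ht, top_add]

lemma phi_nonneg (h : 𝒬.IsSeminormal) (i : ι) (x : Q) : 0 ≤ 𝒬.φ i x := by
  by_cases ht : 𝒬.ε i x = ⊤
  · rw [(phi_top_iff h i x).mpr ht]; exact le_top
  · obtain ⟨n, hn, -⟩ := h.phi_spec i x ht
    rw [hn]; exact_mod_cast Int.natCast_nonneg n

lemma e_none_iff (h : 𝒬.IsSeminormal) (i : ι) (x : Q) :
    𝒬.e i x = none ↔ 𝒬.ε i x = 0 ∨ 𝒬.ε i x = ⊤ := by
  by_cases ht : 𝒬.ε i x = ⊤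
  · simp [h.e_of_top i x ht, ht]
  obtain ⟨n, hn, hg⟩ := h.eps_spec i x ht
  constructor
  · intro he
    left; rw [hn]
    rcases Nat.eq_zero_or_pos n with h0 | h0
    · simp [h0]
    · exfalso
      have h1 : (optIter (𝒬.e i) 1 x).isSome := optIter_isSome_mono _ h0 hg.1
      rw [optIter_one, he] at h1; simp at h1
  · rintro (h0 | h0)
    · rw [hn] at h0
      have hn0 : n = 0 := by exact_mod_cast h0
      by_contra hne
      have h1 : (optIter (𝒬.e i) 1 x).isSome := by
        rw [optIter_one]; exact Option.isSome_iff_ne_none.mpr hne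
      have := hg.2 h1
      omega
    · exact h.e_of_top i x h0

lemma f_none_iff (h : 𝒬.IsSeminormal) (i : ι) (x : Q) :
    𝒬.f i x = none ↔ 𝒬.φ i x = 0 ∨ 𝒬.ε i x = ⊤ := by
  by_cases ht : 𝒬.ε i x = ⊤
  · simp [h.f_of_top i x ht, ht]
  obtain ⟨n, hn, hg⟩ := h.phi_spec i x ht
  constructor
  · intro he
    left; rw [hn]
    rcases Nat.eq_zero_or_pos n with h0 | h0
    · simp [h0]
    · exfalso
      have h1 : (optIter (𝒬.f i) 1 x).isSome := optIter_isSome_mono _ h0 hg.1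
      rw [optIter_one, he] at h1; simp at h1
  · rintro (h0 | h0)
    · rw [hn] at h0
      have hn0 : n = 0 := by exact_mod_cast h0
      by_contra hne
      have h1 : (optIter (𝒬.f i) 1 x).isSome := by
        rw [optIter_one]; exact Option.isSome_iff_ne_none.mpr hne
      have := hg.2 h1
      omega
    · exact h.f_of_top i x h0

end Letter

section Pair

variable {V : Type*} [NormedAddCommGroup V] [InnerProductSpace ℝ V] {ι : Type*}

lemma pair_add (S : QCSetting V ι) (μ ν : S.Λ) (i : ι) :
    S.pair (μ + ν) i = S.pair μ i + S.pair ν i := by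
  have key : ((S.pair (μ + ν) i : ℤ) : ℝ) = ((S.pair μ i + S.pair ν i : ℤ) : ℝ) := by
    rw [S.pair_spec]
    push_cast
    rw [S.pair_spec, S.pair_spec]; simp only [AddSubgroup.coe_add, inner_add_left]
    ring
  exact_mod_cast key

lemma pair_zero (S : QCSetting V ι) (i : ι) : S.pair 0 i = 0 := by
  have key : ((S.pair (0 : S.Λ) i : ℤ) : ℝ) = ((0 : ℤ) : ℝ) := by
    rw [S.pair_spec]
    have hco : ((0 : S.Λ) : V) = (0 : V) := rfl
    rw [hco, inner_zero_left]
    simp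
  exact_mod_cast key

end Pair

section FreeStats

variable {V : Type*} [NormedAddCommGroup V] [InnerProductSpace ℝ V] {ι : Type*}
  {S : QCSetting V ι} {Q : Type*} {𝒬 : QC S Q}

lemma freeWt_append (𝒬 : QC S Q) (a b : List Q) :
    freeWt 𝒬 (a ++ b) = freeWt 𝒬 a + freeWt 𝒬 b := by
  induction a with
  | nil => simp [freeWt]
  | cons x a ih => simp [freeWt, ih, add_assoc]

lemma qfreeEps_nonneg (h : 𝒬.IsSeminormal) (i : ι) (w : List Q) : 0 ≤ qfreeEps 𝒬 i w := by
  induction w with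
  | nil => exact le_rfl
  | cons x w ih =>
      simp only [qfreeEps]
      split_ifs with hc
      · exact le_top
      · exact le_max_of_le_left (eps_nonneg h i x)

lemma qfreePhi_nonneg (h : 𝒬.IsSeminormal) (i : ι) (w : List Q) : 0 ≤ qfreePhi 𝒬 i w := by
  induction w with
  | nil => exact le_rfl
  | cons x w ih =>
      simp only [qfreePhi]
      split_ifs with hc
      · exact le_top
      · exact le_max_of_le_right ih

lemma qfreePhi_eq_eps (h : 𝒬.IsSeminormal) (i : ι) (w : List Q) :
    qfreePhi 𝒬 i w = qfreeEps 𝒬 i w + ((S.pair (freeWt 𝒬 w) i : ℤ) : WithTop ℤ) := by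
  induction w with
  | nil =>
      show (0 : WithTop ℤ) = 0 + ((S.pair (freeWt 𝒬 []) i : ℤ) : WithTop ℤ)
      have : freeWt 𝒬 [] = 0 := rfl
      rw [this, pair_zero]
      simp
  | cons x w ih =>
      simp only [qfreePhi, qfreeEps]
      split_ifs with hc
      · rw [top_add]
      · have hwt : freeWt 𝒬 (x :: w) = 𝒬.wt x + freeWt 𝒬 w := rfl
        rw [hwt, pair_add, wt_max_add, ← wt_add_coe (𝒬.ε i x), ← h.phi_eq,
          wt_add_coe (qfreeEps 𝒬 i w), neg_add_cancel_left, ih]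

lemma qfreePhi_top_iff (h : 𝒬.IsSeminormal) (i : ι) (w : List Q) :
    qfreePhi 𝒬 i w = ⊤ ↔ qfreeEps 𝒬 i w = ⊤ := by
  rw [qfreePhi_eq_eps h]
  rcases eq_or_ne (qfreeEps 𝒬 i w) ⊤ with hE | hE
  · simp [hE]
  · simp [WithTop.add_ne_top.mpr ⟨hE, WithTop.coe_ne_top⟩, hE]

/-- The key lemma matching the "infinite" conditions of `x·(a·b)` and `(x·a)·b`. -/
lemma qcond_iff {φx εx Ea Pa Eb : WithTop ℤ} {px pa : ℤ}
    (h1 : φx = εx + ↑px) (hε0 : 0 ≤ εx) (hφ0 : 0 ≤ φx) (hEa : 0 ≤ Ea) (hEb : 0 ≤ Eb)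
    (hPa : Pa = Ea + ↑pa) (hPa0 : 0 ≤ Pa)
    (hA : ¬(0 < φx ∧ 0 < Ea)) (hB : ¬(0 < Pa ∧ 0 < Eb)) :
    (0 < φx ∧ 0 < max Ea (Eb + ↑(-pa))) ↔ (0 < max (φx + ↑pa) Pa ∧ 0 < Eb) := by
  constructor
  · rintro ⟨hφ, hm⟩
    have hEa0 : Ea = 0 := wt_eq_zero_of _ hEa (fun hlt => hA ⟨hφ, hlt⟩)
    have hEbpa : 0 < Eb + ↑(-pa) := by
      rcases lt_max_iff.mp hm with hlt | hlt
      · rw [hEa0] at hlt; exact absurd hlt (lt_irrefl 0)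
      · exact hlt
    have hpa0 : (0 : WithTop ℤ) ≤ ↑pa := by
      have : Pa = ↑pa := by rw [hPa, hEa0, zero_add]
      rw [← this]; exact hPa0
    have hEbpos : 0 < Eb := by
      have h2 : 0 + ↑pa < Eb + ↑(-pa) + ↑pa := (wt_shift_lt _ _ pa).mpr hEbpa
      rw [zero_add, wt_add_coe, neg_add_cancel, WithTop.coe_zero, add_zero] at h2
      exact lt_of_le_of_lt hpa0 h2
    exact ⟨lt_max_of_lt_left (lt_of_lt_of_le hφ (le_add_of_nonneg_right hpa0)), hEbpos⟩
  · rintro ⟨hm, hEb'⟩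
    have hPa00 : Pa = 0 := wt_eq_zero_of _ hPa0 (fun hlt => hB ⟨hlt, hEb'⟩)
    have hEaT : Ea ≠ ⊤ := by
      intro hT; rw [hT] at hPa; rw [hPa] at hPa00
      rw [top_add] at hPa00; exact (by simp : (⊤ : WithTop ℤ) ≠ 0) hPa00
    obtain ⟨ea, rfl⟩ : ∃ ea : ℤ, Ea = (ea : WithTop ℤ) := by
      cases hc : Ea with
      | top => exact absurd hc hEaT
      | coe z => exact ⟨z, rfl⟩
    have hea : ea + pa = 0 := by
      rw [hPa] at hPa00
      exact_mod_cast hPa00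
    have hea0 : 0 ≤ ea := by exact_mod_cast hEa
    have hpa_le : pa ≤ 0 := by omega
    have hφ : 0 < φx := by
      have hfm : 0 < φx + ↑pa := by
        rcases lt_max_iff.mp hm with hlt | hlt
        · exact hlt
        · rw [hPa00] at hlt; exact absurd hlt (lt_irrefl 0)
      have : φx + ↑pa ≤ φx + 0 := by
        gcongr
        exact_mod_cast hpa_le
      rw [add_zero] at this
      exact lt_of_lt_of_le hfm this
    refine ⟨hφ, lt_max_of_lt_right ?_⟩
    have : Eb + 0 ≤ Eb + ↑(-pa) := by
      gcongr
      exact_mod_cast (by omega : (0:ℤ) ≤ -pa)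
    rw [add_zero] at this
    exact lt_of_lt_of_le hEb' this

end FreeStats

section FreeStats2

variable {V : Type*} [NormedAddCommGroup V] [InnerProductSpace ℝ V] {ι : Type*}
  {S : QCSetting V ι} {Q : Type*} {𝒬 : QC S Q}

lemma wt_zero_lt_top : (0 : WithTop ℤ) < ⊤ := by
  exact_mod_cast WithTop.coe_lt_top (0 : ℤ)

lemma wt_max_ne_top {a b : WithTop ℤ} (ha : a ≠ ⊤) (hb : b ≠ ⊤) : max a b ≠ ⊤ := by
  rcases max_cases a b with ⟨hm, -⟩ | ⟨hm, -⟩ <;> rw [hm] <;> assumption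

lemma wt_neg_le {εx : WithTop ℤ} {px : ℤ} (h0 : 0 ≤ εx + ↑px) : (↑(-px) : WithTop ℤ) ≤ εx := by
  cases εx with
  | top => exact le_top
  | coe e =>
      have : (0 : WithTop ℤ) ≤ ↑(e + px) := by rw [← WithTop.coe_add] at h0; exact h0
      have h1 : (0 : ℤ) ≤ e + px := by exact_mod_cast this
      exact_mod_cast (by omega : -px ≤ e)

lemma qfreeEps_cons (𝒬 : QC S Q) (i : ι) (x : Q) (w : List Q) :
    qfreeEps 𝒬 i (x :: w) =
      if 0 < 𝒬.φ i x ∧ 0 < qfreeEps 𝒬 i w then ⊤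
      else max (𝒬.ε i x) (qfreeEps 𝒬 i w + ↑(-(S.pair (𝒬.wt x) i))) := rfl

lemma qfreePhi_cons (𝒬 : QC S Q) (i : ι) (x : Q) (w : List Q) :
    qfreePhi 𝒬 i (x :: w) =
      if 0 < 𝒬.φ i x ∧ 0 < qfreeEps 𝒬 i w then ⊤
      else max (𝒬.φ i x + ↑(S.pair (freeWt 𝒬 w) i)) (qfreePhi 𝒬 i w) := rfl

lemma qfreeEps_append (h : 𝒬.IsSeminormal) (i : ι) (a b : List Q) :
    qfreeEps 𝒬 i (a ++ b) =
      if 0 < qfreePhi 𝒬 i a ∧ 0 < qfreeEps 𝒬 i b then ⊤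
      else max (qfreeEps 𝒬 i a) (qfreeEps 𝒬 i b + ↑(-(S.pair (freeWt 𝒬 a) i))) := by
  induction a with
  | nil =>
      have h1 : qfreePhi 𝒬 i ([] : List Q) = 0 := rfl
      have h2 : qfreeEps 𝒬 i ([] : List Q) = 0 := rfl
      have h3 : freeWt 𝒬 ([] : List Q) = 0 := rfl
      rw [List.nil_append, h1, h2, h3, pair_zero, if_neg (fun hc => lt_irrefl _ hc.1),
        neg_zero]
      simp only [WithTop.coe_zero, add_zero]
      exact (max_eq_right (qfreeEps_nonneg h i b)).symm
  | cons x a ih =>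
      have hwt : freeWt 𝒬 (x :: a) = 𝒬.wt x + freeWt 𝒬 a := rfl
      rw [List.cons_append, qfreeEps_cons, qfreeEps_cons, qfreePhi_cons, hwt, pair_add, ih]
      by_cases hB : 0 < qfreePhi 𝒬 i a ∧ 0 < qfreeEps 𝒬 i b
      · rw [if_pos hB]
        have hL : (if 0 < 𝒬.φ i x ∧ 0 < (⊤ : WithTop ℤ) then (⊤ : WithTop ℤ)
            else max (𝒬.ε i x) (⊤ + ↑(-(S.pair (𝒬.wt x) i)))) = ⊤ := by
          split_ifs with hc
          · rfl
          · rw [top_add]; exact max_eq_right le_top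
        rw [hL]
        by_cases hA : 0 < 𝒬.φ i x ∧ 0 < qfreeEps 𝒬 i a
        · rw [if_pos hA, if_pos ⟨wt_zero_lt_top, hB.2⟩]
        · rw [if_neg hA, if_pos ⟨lt_of_lt_of_le hB.1 (le_max_right _ _), hB.2⟩]
      · rw [if_neg hB]
        by_cases hA : 0 < 𝒬.φ i x ∧ 0 < qfreeEps 𝒬 i a
        · rw [if_pos hA, if_pos hA,
            if_pos ⟨hA.1, lt_max_of_lt_left hA.2⟩]
          split_ifs with hc
          · rfl
          · exact (max_eq_left le_top).symm
        · have hD := qcond_iff (h.phi_eq i x) (eps_nonneg h i x) (phi_nonneg h i x)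
            (qfreeEps_nonneg h i a) (qfreeEps_nonneg h i b) (qfreePhi_eq_eps h i a)
            (qfreePhi_nonneg h i a) hA hB
          rw [if_neg hA, if_neg hA]
          by_cases hL : 0 < 𝒬.φ i x ∧
              0 < max (qfreeEps 𝒬 i a) (qfreeEps 𝒬 i b + ↑(-(S.pair (freeWt 𝒬 a) i)))
          · rw [if_pos hL, if_pos (hD.mp hL)]
          · rw [if_neg hL, if_neg (fun hc => hL (hD.mpr hc))]
            rw [wt_max_add, wt_add_coe (qfreeEps 𝒬 i b), ← max_assoc]
            have harith : -(S.pair (freeWt 𝒬 a) i) + -(S.pair (𝒬.wt x) i) =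
                -(S.pair (𝒬.wt x) i + S.pair (freeWt 𝒬 a) i) := by ring
            rw [harith]

lemma qfreeE_none_iff (h : 𝒬.IsSeminormal) (i : ι) (w : List Q) :
    qfreeE 𝒬 i w = none ↔ qfreeEps 𝒬 i w = 0 ∨ qfreeEps 𝒬 i w = ⊤ := by
  induction w with
  | nil => simp [qfreeE, qfreeEps]
  | cons x w ih =>
      simp only [qfreeE, qfreeEps]
      split_ifs with hA hle
      · simp
      · rw [Option.map_eq_none_iff, e_none_iff h]
        have hEw : qfreeEps 𝒬 i w = 0 := by
          by_cases hp : 0 < 𝒬.φ i x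
          · exact wt_eq_zero_of _ (qfreeEps_nonneg h i w) (fun hE => hA ⟨hp, hE⟩)
          · exact wt_eq_zero_of _ (qfreeEps_nonneg h i w)
              (fun hE => hp (lt_of_lt_of_le hE hle))
        rw [hEw, zero_add]
        have hneg : (↑(-(S.pair (𝒬.wt x) i)) : WithTop ℤ) ≤ 𝒬.ε i x :=
          wt_neg_le (le_of_le_of_eq (phi_nonneg h i x) (h.phi_eq i x))
        rw [max_eq_left hneg]
      · rw [Option.map_eq_none_iff, ih]
        have hlt : 𝒬.φ i x < qfreeEps 𝒬 i w := not_le.mp hle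
        rcases eq_or_ne (qfreeEps 𝒬 i w) ⊤ with hT | hT
        · rw [hT, top_add, max_eq_right le_top]
        · have hEwpos : 0 < qfreeEps 𝒬 i w := lt_of_le_of_lt (phi_nonneg h i x) hlt
          have hφ0 : 𝒬.φ i x = 0 :=
            wt_eq_zero_of _ (phi_nonneg h i x) (fun hp => hA ⟨hp, hEwpos⟩)
          have hεne : 𝒬.ε i x ≠ ⊤ := by
            intro hc
            exact absurd ((phi_top_iff h i x).mpr hc) (by rw [hφ0]; simp)
          obtain ⟨e, he⟩ : ∃ e : ℤ, 𝒬.ε i x = (e : WithTop ℤ) := by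
            cases hc : 𝒬.ε i x with
            | top => exact absurd hc hεne
            | coe z => exact ⟨z, rfl⟩
          have hepx : e + S.pair (𝒬.wt x) i = 0 := by
            have := h.phi_eq i x
            rw [hφ0, he, ← WithTop.coe_add] at this
            exact_mod_cast this.symm
          have hnegpx : -(S.pair (𝒬.wt x) i) = e := by omega
          have he0 : (0 : ℤ) ≤ e := by
            have := eps_nonneg h i x
            rw [he] at this
            exact_mod_cast this
          rw [he, hnegpx]
          have hlt2 : (↑e : WithTop ℤ) < qfreeEps 𝒬 i w + ↑e := by
            have := (wt_shift_lt 0 (qfreeEps 𝒬 i w) e).mpr hEwpos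
            rwa [zero_add] at this
          have hmax : max (↑e : WithTop ℤ) (qfreeEps 𝒬 i w + ↑e) =
              qfreeEps 𝒬 i w + ↑e := max_eq_right (le_of_lt hlt2)
          rw [hmax]
          refine iff_of_false ?_ ?_
          · rintro (h0 | h0)
            · exact absurd h0 (ne_of_gt hEwpos)
            · exact hT h0
          · rintro (h0 | h0)
            · have : (0 : WithTop ℤ) < qfreeEps 𝒬 i w + ↑e :=
                lt_of_le_of_lt (by exact_mod_cast he0) hlt2
              exact absurd h0 (ne_of_gt this)
            · exact (WithTop.add_ne_top.mpr ⟨hT, WithTop.coe_ne_top⟩) h0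

end FreeStats2

section FreeStats3

variable {V : Type*} [NormedAddCommGroup V] [InnerProductSpace ℝ V] {ι : Type*}
  {S : QCSetting V ι} {Q : Type*} {𝒬 : QC S Q}

lemma qfreeE_cons (𝒬 : QC S Q) (i : ι) (x : Q) (w : List Q) :
    qfreeE 𝒬 i (x :: w) =
      if 0 < 𝒬.φ i x ∧ 0 < qfreeEps 𝒬 i w then none
      else if qfreeEps 𝒬 i w ≤ 𝒬.φ i x then (𝒬.e i x).map (· :: w)
      else (qfreeE 𝒬 i w).map (x :: ·) := rfl

lemma qfreeF_cons (𝒬 : QC S Q) (i : ι) (x : Q) (w : List Q) :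
    qfreeF 𝒬 i (x :: w) =
      if 0 < 𝒬.φ i x ∧ 0 < qfreeEps 𝒬 i w then none
      else if qfreeEps 𝒬 i w < 𝒬.φ i x then (𝒬.f i x).map (· :: w)
      else (qfreeF 𝒬 i w).map (x :: ·) := rfl

lemma qfreeF_none_iff (h : 𝒬.IsSeminormal) (i : ι) (w : List Q) :
    qfreeF 𝒬 i w = none ↔ qfreePhi 𝒬 i w = 0 ∨ qfreeEps 𝒬 i w = ⊤ := by
  induction w with
  | nil => simp [qfreeF, qfreePhi, qfreeEps]
  | cons x w ih =>
      rw [qfreeF_cons, qfreePhi_cons, qfreeEps_cons]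
      split_ifs with hA hlt
      · simp
      · rw [Option.map_eq_none_iff, f_none_iff h]
        have hφpos : 0 < 𝒬.φ i x := lt_of_le_of_lt (qfreeEps_nonneg h i w) hlt
        have hEw : qfreeEps 𝒬 i w = 0 :=
          wt_eq_zero_of _ (qfreeEps_nonneg h i w) (fun hE => hA ⟨hφpos, hE⟩)
        rw [or_iff_right (ne_of_gt hφpos), hEw, zero_add]
        rcases eq_or_ne (𝒬.ε i x) ⊤ with hε | hε
        · refine iff_of_true hε (Or.inr ?_)
          rw [hε]; exact max_eq_left le_top
        · refine iff_of_false hε ?_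
          rintro (h0 | h0)
          · have hPw : qfreePhi 𝒬 i w = ↑(S.pair (freeWt 𝒬 w) i) := by
              rw [qfreePhi_eq_eps h, hEw, zero_add]
            have hpw0 : (0 : WithTop ℤ) ≤ ↑(S.pair (freeWt 𝒬 w) i) := by
              rw [← hPw]; exact qfreePhi_nonneg h i w
            have h1 : 0 < 𝒬.φ i x + ↑(S.pair (freeWt 𝒬 w) i) :=
              lt_of_lt_of_le hφpos (le_add_of_nonneg_right hpw0)
            exact absurd h0 (ne_of_gt (lt_of_lt_of_le h1 (le_max_left _ _)))
          · exact (wt_max_ne_top hε WithTop.coe_ne_top) h0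
      · rw [Option.map_eq_none_iff, ih]
        rcases eq_or_ne (qfreeEps 𝒬 i w) ⊤ with hT | hT
        · refine iff_of_true (Or.inr hT) (Or.inr ?_)
          rw [hT, top_add]; exact max_eq_right le_top
        · have hle := not_lt.mp hlt
          have hφne : 𝒬.φ i x ≠ ⊤ := fun hc => hT (top_le_iff.mp (hc ▸ hle))
          have hεne : 𝒬.ε i x ≠ ⊤ := fun hc => hφne ((phi_top_iff h i x).mpr hc)
          have hmaxne : max (𝒬.ε i x) (qfreeEps 𝒬 i w + ↑(-(S.pair (𝒬.wt x) i))) ≠ ⊤ :=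
            wt_max_ne_top hεne (WithTop.add_ne_top.mpr ⟨hT, WithTop.coe_ne_top⟩)
          have h1 : 𝒬.φ i x + ↑(S.pair (freeWt 𝒬 w) i) ≤ qfreePhi 𝒬 i w := by
            rw [qfreePhi_eq_eps h]; exact (wt_shift_le _ _ _).mpr hle
          rw [or_iff_left hT, or_iff_left hmaxne, max_eq_right h1]

lemma qfreePhi_append (h : 𝒬.IsSeminormal) (i : ι) (a b : List Q) :
    qfreePhi 𝒬 i (a ++ b) =
      if 0 < qfreePhi 𝒬 i a ∧ 0 < qfreeEps 𝒬 i b then ⊤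
      else max (qfreePhi 𝒬 i a + ↑(S.pair (freeWt 𝒬 b) i)) (qfreePhi 𝒬 i b) := by
  rw [qfreePhi_eq_eps h i (a ++ b), qfreeEps_append h, freeWt_append, pair_add]
  split_ifs with hc
  · rw [top_add]
  · rw [wt_max_add, wt_add_coe (qfreeEps 𝒬 i b), qfreePhi_eq_eps h i a, qfreePhi_eq_eps h i b,
      wt_add_coe (qfreeEps 𝒬 i a)]
    have harith : -(S.pair (freeWt 𝒬 a) i) +
        (S.pair (freeWt 𝒬 a) i + S.pair (freeWt 𝒬 b) i) = S.pair (freeWt 𝒬 b) i := by ring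
    rw [harith]

lemma qfreeE_append (h : 𝒬.IsSeminormal) (i : ι) (a b : List Q) :
    qfreeE 𝒬 i (a ++ b) =
      if 0 < qfreePhi 𝒬 i a ∧ 0 < qfreeEps 𝒬 i b then none
      else if qfreeEps 𝒬 i b ≤ qfreePhi 𝒬 i a then (qfreeE 𝒬 i a).map (· ++ b)
      else (qfreeE 𝒬 i b).map (a ++ ·) := by
  induction a with
  | nil =>
      have h1 : qfreePhi 𝒬 i ([] : List Q) = 0 := rfl
      have h2 : qfreeE 𝒬 i ([] : List Q) = none := rfl
      rw [List.nil_append, h1, h2, if_neg (fun hc => lt_irrefl _ hc.1)]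
      by_cases hEb : qfreeEps 𝒬 i b ≤ 0
      · have hEb0 : qfreeEps 𝒬 i b = 0 := le_antisymm hEb (qfreeEps_nonneg h i b)
        rw [if_pos hEb, Option.map_none]
        exact (qfreeE_none_iff h i b).mpr (Or.inl hEb0)
      · rw [if_neg hEb]
        cases qfreeE 𝒬 i b <;> rfl
  | cons x a ih =>
      rw [List.cons_append, qfreeE_cons, qfreeE_cons, qfreePhi_cons,
        qfreeEps_append h, ih]
      by_cases hB : 0 < qfreePhi 𝒬 i a ∧ 0 < qfreeEps 𝒬 i b
      · simp only [if_pos hB]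
        by_cases hφ : 0 < 𝒬.φ i x
        · rw [if_pos ⟨hφ, wt_zero_lt_top⟩]
          by_cases hA : 0 < 𝒬.φ i x ∧ 0 < qfreeEps 𝒬 i a
          · rw [if_pos hA, if_pos ⟨wt_zero_lt_top, hB.2⟩]
          · rw [if_neg hA, if_pos ⟨lt_of_lt_of_le hB.1 (le_max_right _ _), hB.2⟩]
        · have hTle : ¬ (⊤ : WithTop ℤ) ≤ 𝒬.φ i x := by
            intro hc
            exact hφ (by rw [top_le_iff.mp hc]; exact wt_zero_lt_top)
          rw [if_neg (fun hc => hφ hc.1), if_neg hTle, Option.map_none]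
          have hA : ¬(0 < 𝒬.φ i x ∧ 0 < qfreeEps 𝒬 i a) := fun hc => hφ hc.1
          rw [if_neg hA, if_pos ⟨lt_of_lt_of_le hB.1 (le_max_right _ _), hB.2⟩]
      · simp only [if_neg hB]
        by_cases hA : 0 < 𝒬.φ i x ∧ 0 < qfreeEps 𝒬 i a
        · simp only [if_pos hA]
          rw [if_pos ⟨hA.1, lt_max_of_lt_left hA.2⟩]
          by_cases hEb : 0 < qfreeEps 𝒬 i b
          · rw [if_pos ⟨wt_zero_lt_top, hEb⟩]
          · rw [if_neg (fun hc => hEb hc.2), if_pos le_top, Option.map_none]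
        · simp only [if_neg hA]
          have hD := qcond_iff (h.phi_eq i x) (eps_nonneg h i x) (phi_nonneg h i x)
            (qfreeEps_nonneg h i a) (qfreeEps_nonneg h i b) (qfreePhi_eq_eps h i a)
            (qfreePhi_nonneg h i a) hA hB
          by_cases hL : 0 < 𝒬.φ i x ∧
              0 < max (qfreeEps 𝒬 i a) (qfreeEps 𝒬 i b + ↑(-(S.pair (freeWt 𝒬 a) i)))
          · rw [if_pos hL, if_pos (hD.mp hL)]
          · rw [if_neg hL, if_neg (fun hc => hL (hD.mpr hc))]
            by_cases hc1 : max (qfreeEps 𝒬 i a)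
                (qfreeEps 𝒬 i b + ↑(-(S.pair (freeWt 𝒬 a) i))) ≤ 𝒬.φ i x
            · have hc4 : qfreeEps 𝒬 i a ≤ 𝒬.φ i x := le_trans (le_max_left _ _) hc1
              have hc3 : qfreeEps 𝒬 i b ≤
                  max (𝒬.φ i x + ↑(S.pair (freeWt 𝒬 a) i)) (qfreePhi 𝒬 i a) := by
                have h2 : qfreeEps 𝒬 i b + ↑(-(S.pair (freeWt 𝒬 a) i)) ≤ 𝒬.φ i x :=
                  le_trans (le_max_right _ _) hc1
                have h3 := (wt_shift_le _ _ (S.pair (freeWt 𝒬 a) i)).mpr h2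
                rw [wt_add_coe, neg_add_cancel, WithTop.coe_zero, add_zero] at h3
                exact le_trans h3 (le_max_left _ _)
              rw [if_pos hc1, if_pos hc3, if_pos hc4]
              cases 𝒬.e i x <;> rfl
            · rw [if_neg hc1]
              by_cases hc3 : qfreeEps 𝒬 i b ≤
                  max (𝒬.φ i x + ↑(S.pair (freeWt 𝒬 a) i)) (qfreePhi 𝒬 i a)
              · by_cases hc4 : qfreeEps 𝒬 i a ≤ 𝒬.φ i x
                · exfalso; apply hc1
                  have hPa_le : qfreePhi 𝒬 i a ≤ 𝒬.φ i x + ↑(S.pair (freeWt 𝒬 a) i) := by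
                    rw [qfreePhi_eq_eps h]; exact (wt_shift_le _ _ _).mpr hc4
                  have hEb_le : qfreeEps 𝒬 i b ≤ 𝒬.φ i x + ↑(S.pair (freeWt 𝒬 a) i) :=
                    le_trans hc3 (max_le le_rfl hPa_le)
                  have h2 := (wt_shift_le _ _ (-(S.pair (freeWt 𝒬 a) i))).mpr hEb_le
                  rw [wt_cancel] at h2
                  exact max_le hc4 h2
                · rw [if_pos hc3, if_neg hc4]
                  by_cases hc2 : qfreeEps 𝒬 i b ≤ qfreePhi 𝒬 i a
                  · rw [if_pos hc2]
                    cases qfreeE 𝒬 i a <;> rfl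
                  · exfalso
                    have h5 : 𝒬.φ i x + ↑(S.pair (freeWt 𝒬 a) i) ≤ qfreePhi 𝒬 i a := by
                      rw [qfreePhi_eq_eps h]
                      exact (wt_shift_le _ _ _).mpr (not_le.mp hc4).le
                    exact hc2 (le_trans hc3 (max_le h5 le_rfl))
              · rw [if_neg hc3]
                have hc2 : ¬ qfreeEps 𝒬 i b ≤ qfreePhi 𝒬 i a :=
                  fun hc => hc3 (le_trans hc (le_max_right _ _))
                rw [if_neg hc2]
                cases qfreeE 𝒬 i b <;> rfl

lemma qfreeF_append (h : 𝒬.IsSeminormal) (i : ι) (a b : List Q) :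
    qfreeF 𝒬 i (a ++ b) =
      if 0 < qfreePhi 𝒬 i a ∧ 0 < qfreeEps 𝒬 i b then none
      else if qfreeEps 𝒬 i b < qfreePhi 𝒬 i a then (qfreeF 𝒬 i a).map (· ++ b)
      else (qfreeF 𝒬 i b).map (a ++ ·) := by
  induction a with
  | nil =>
      have h1 : qfreePhi 𝒬 i ([] : List Q) = 0 := rfl
      rw [List.nil_append, h1, if_neg (fun hc => lt_irrefl _ hc.1),
        if_neg (fun hc => absurd (lt_of_le_of_lt (qfreeEps_nonneg h i b) hc) (lt_irrefl 0))]
      cases qfreeF 𝒬 i b <;> rfl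
  | cons x a ih =>
      rw [List.cons_append, qfreeF_cons, qfreeF_cons, qfreePhi_cons,
        qfreeEps_append h, ih]
      by_cases hB : 0 < qfreePhi 𝒬 i a ∧ 0 < qfreeEps 𝒬 i b
      · simp only [if_pos hB]
        by_cases hφ : 0 < 𝒬.φ i x
        · rw [if_pos ⟨hφ, wt_zero_lt_top⟩]
          by_cases hA : 0 < 𝒬.φ i x ∧ 0 < qfreeEps 𝒬 i a
          · rw [if_pos hA, if_pos ⟨wt_zero_lt_top, hB.2⟩]
          · rw [if_neg hA, if_pos ⟨lt_of_lt_of_le hB.1 (le_max_right _ _), hB.2⟩]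
        · rw [if_neg (fun hc => hφ hc.1), if_neg (fun hc => not_top_lt hc), Option.map_none]
          have hA : ¬(0 < 𝒬.φ i x ∧ 0 < qfreeEps 𝒬 i a) := fun hc => hφ hc.1
          rw [if_neg hA, if_pos ⟨lt_of_lt_of_le hB.1 (le_max_right _ _), hB.2⟩]
      · simp only [if_neg hB]
        by_cases hA : 0 < 𝒬.φ i x ∧ 0 < qfreeEps 𝒬 i a
        · simp only [if_pos hA]
          rw [if_pos ⟨hA.1, lt_max_of_lt_left hA.2⟩]
          by_cases hEb : 0 < qfreeEps 𝒬 i b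
          · rw [if_pos ⟨wt_zero_lt_top, hEb⟩]
          · rw [if_neg (fun hc => hEb hc.2)]
            have hEb0 : qfreeEps 𝒬 i b = 0 := wt_eq_zero_of _ (qfreeEps_nonneg h i b) hEb
            rw [hEb0, if_pos wt_zero_lt_top, Option.map_none]
        · simp only [if_neg hA]
          have hD := qcond_iff (h.phi_eq i x) (eps_nonneg h i x) (phi_nonneg h i x)
            (qfreeEps_nonneg h i a) (qfreeEps_nonneg h i b) (qfreePhi_eq_eps h i a)
            (qfreePhi_nonneg h i a) hA hB
          by_cases hL : 0 < 𝒬.φ i x ∧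
              0 < max (qfreeEps 𝒬 i a) (qfreeEps 𝒬 i b + ↑(-(S.pair (freeWt 𝒬 a) i)))
          · rw [if_pos hL, if_pos (hD.mp hL)]
          · rw [if_neg hL, if_neg (fun hc => hL (hD.mpr hc))]
            by_cases hc1 : max (qfreeEps 𝒬 i a)
                (qfreeEps 𝒬 i b + ↑(-(S.pair (freeWt 𝒬 a) i))) < 𝒬.φ i x
            · have hc4 : qfreeEps 𝒬 i a < 𝒬.φ i x := lt_of_le_of_lt (le_max_left _ _) hc1
              have hc3 : qfreeEps 𝒬 i b <
                  max (𝒬.φ i x + ↑(S.pair (freeWt 𝒬 a) i)) (qfreePhi 𝒬 i a) := by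
                have h2 : qfreeEps 𝒬 i b + ↑(-(S.pair (freeWt 𝒬 a) i)) < 𝒬.φ i x :=
                  lt_of_le_of_lt (le_max_right _ _) hc1
                have h3 := (wt_shift_lt _ _ (S.pair (freeWt 𝒬 a) i)).mpr h2
                rw [wt_add_coe, neg_add_cancel, WithTop.coe_zero, add_zero] at h3
                exact lt_of_lt_of_le h3 (le_max_left _ _)
              rw [if_pos hc1, if_pos hc3, if_pos hc4]
              cases 𝒬.f i x <;> rfl
            · rw [if_neg hc1]
              by_cases hc3 : qfreeEps 𝒬 i b <
                  max (𝒬.φ i x + ↑(S.pair (freeWt 𝒬 a) i)) (qfreePhi 𝒬 i a)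
              · by_cases hc4 : qfreeEps 𝒬 i a < 𝒬.φ i x
                · exfalso; apply hc1
                  have hPa_lt : qfreePhi 𝒬 i a < 𝒬.φ i x + ↑(S.pair (freeWt 𝒬 a) i) := by
                    rw [qfreePhi_eq_eps h]; exact (wt_shift_lt _ _ _).mpr hc4
                  have hEb_lt : qfreeEps 𝒬 i b < 𝒬.φ i x + ↑(S.pair (freeWt 𝒬 a) i) :=
                    lt_of_lt_of_le hc3 (max_le le_rfl hPa_lt.le)
                  have h2 := (wt_shift_lt _ _ (-(S.pair (freeWt 𝒬 a) i))).mpr hEb_lt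
                  rw [wt_cancel] at h2
                  exact max_lt hc4 h2
                · rw [if_pos hc3, if_neg hc4]
                  by_cases hc2 : qfreeEps 𝒬 i b < qfreePhi 𝒬 i a
                  · rw [if_pos hc2]
                    cases qfreeF 𝒬 i a <;> rfl
                  · exfalso
                    have h5 : 𝒬.φ i x + ↑(S.pair (freeWt 𝒬 a) i) ≤ qfreePhi 𝒬 i a := by
                      rw [qfreePhi_eq_eps h]
                      exact (wt_shift_le _ _ _).mpr (not_lt.mp hc4)
                    exact hc2 (lt_of_lt_of_le hc3 (max_le h5 le_rfl))
              · rw [if_neg hc3]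
                have hc2 : ¬ qfreeEps 𝒬 i b < qfreePhi 𝒬 i a :=
                  fun hc => hc3 (lt_of_lt_of_le hc (le_max_right _ _))
                rw [if_neg hc2]
                cases qfreeF 𝒬 i b <;> rfl

lemma qfreeE_length {h' : 𝒬.IsSeminormal} {i : ι} {w w' : List Q}
    (hw : qfreeE 𝒬 i w = some w') : w'.length = w.length := by
  induction w generalizing w' with
  | nil => simp [qfreeE] at hw
  | cons x w ih =>
      rw [qfreeE_cons] at hw
      split_ifs at hw with hA hle
      · rcases Option.map_eq_some_iff.mp hw with ⟨y, -, rfl⟩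
        simp
      · rcases Option.map_eq_some_iff.mp hw with ⟨y, hy, rfl⟩
        simp [ih hy]

lemma qfreeF_length {h' : 𝒬.IsSeminormal} {i : ι} {w w' : List Q}
    (hw : qfreeF 𝒬 i w = some w') : w'.length = w.length := by
  induction w generalizing w' with
  | nil => simp [qfreeF] at hw
  | cons x w ih =>
      rw [qfreeF_cons] at hw
      split_ifs at hw with hA hle
      · rcases Option.map_eq_some_iff.mp hw with ⟨y, -, rfl⟩
        simp
      · rcases Option.map_eq_some_iff.mp hw with ⟨y, hy, rfl⟩
        simp [ih hy]

end FreeStats3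

section Comp

variable {V : Type*} [NormedAddCommGroup V] [InnerProductSpace ℝ V] {ι : Type*}
  {S : QCSetting V ι} {Q : Type*} {𝒬 : QC S Q}

lemma opt_val_pmap {α : Type*} {p : α → Prop} (o : Option α) (H : ∀ a, a ∈ o → p a) :
    Option.map Subtype.val (o.pmap (fun a ha => (⟨a, ha⟩ : {a // p a})) H) = o := by
  cases o <;> rfl

lemma compQC_e_val {Q' : Type*} {𝒬' : QC S Q'} {x : Q'} (i : ι) (y : {z // 𝒬'.conn x z}) :
    Option.map Subtype.val ((𝒬'.compQC x).e i y) = 𝒬'.e i y.1 :=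
  opt_val_pmap _ _

lemma compQC_f_val {Q' : Type*} {𝒬' : QC S Q'} {x : Q'} (i : ι) (y : {z // 𝒬'.conn x z}) :
    Option.map Subtype.val ((𝒬'.compQC x).f i y) = 𝒬'.f i y.1 :=
  opt_val_pmap _ _

lemma compQC_e_some_iff {Q' : Type*} {𝒬' : QC S Q'} {x : Q'} (i : ι)
    (y w : {z // 𝒬'.conn x z}) :
    (𝒬'.compQC x).e i y = some w ↔ 𝒬'.e i y.1 = some w.1 := by
  constructor
  · intro hw
    have hval := compQC_e_val (𝒬' := 𝒬') (x := x) i y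
    rw [hw] at hval
    exact hval.symm
  · intro hw
    have hval := compQC_e_val (𝒬' := 𝒬') (x := x) i y
    rw [hw] at hval
    rcases Option.map_eq_some_iff.mp hval with ⟨a, ha, hav⟩
    rw [ha]
    exact congrArg some (Subtype.ext hav)

lemma compQC_f_some_iff {Q' : Type*} {𝒬' : QC S Q'} {x : Q'} (i : ι)
    (y w : {z // 𝒬'.conn x z}) :
    (𝒬'.compQC x).f i y = some w ↔ 𝒬'.f i y.1 = some w.1 := by
  constructor
  · intro hw
    have hval := compQC_f_val (𝒬' := 𝒬') (x := x) i y
    rw [hw] at hval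
    exact hval.symm
  · intro hw
    have hval := compQC_f_val (𝒬' := 𝒬') (x := x) i y
    rw [hw] at hval
    rcases Option.map_eq_some_iff.mp hval with ⟨a, ha, hav⟩
    rw [ha]
    exact congrArg some (Subtype.ext hav)

lemma M_e_some_iff (𝒬 : QC S Q) (i : ι) (w z : FreeMonoid Q) :
    (freeQTensorQC 𝒬).e i w = some z ↔
      qfreeE 𝒬 i (FreeMonoid.toList w) = some (FreeMonoid.toList z) := by
  show (qfreeE 𝒬 i (FreeMonoid.toList w)).map _ = some z ↔ _
  constructor
  · intro hz
    rcases Option.map_eq_some_iff.mp hz with ⟨l, hl, rfl⟩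
    rw [hl]
    rfl
  · intro hz
    rw [hz]
    rfl

lemma M_f_some_iff (𝒬 : QC S Q) (i : ι) (w z : FreeMonoid Q) :
    (freeQTensorQC 𝒬).f i w = some z ↔
      qfreeF 𝒬 i (FreeMonoid.toList w) = some (FreeMonoid.toList z) := by
  show (qfreeF 𝒬 i (FreeMonoid.toList w)).map _ = some z ↔ _
  constructor
  · intro hz
    rcases Option.map_eq_some_iff.mp hz with ⟨l, hl, rfl⟩
    rw [hl]
    rfl
  · intro hz
    rw [hz]
    rfl

lemma M_e_none_iff (h : 𝒬.IsSeminormal) (i : ι) (w : FreeMonoid Q) :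
    (freeQTensorQC 𝒬).e i w = none ↔
      qfreeEps 𝒬 i (FreeMonoid.toList w) = 0 ∨ qfreeEps 𝒬 i (FreeMonoid.toList w) = ⊤ := by
  show (qfreeE 𝒬 i (FreeMonoid.toList w)).map _ = none ↔ _
  rw [Option.map_eq_none_iff]
  exact qfreeE_none_iff h i _

lemma M_f_none_iff (h : 𝒬.IsSeminormal) (i : ι) (w : FreeMonoid Q) :
    (freeQTensorQC 𝒬).f i w = none ↔
      qfreePhi 𝒬 i (FreeMonoid.toList w) = 0 ∨ qfreeEps 𝒬 i (FreeMonoid.toList w) = ⊤ := by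
  show (qfreeF 𝒬 i (FreeMonoid.toList w)).map _ = none ↔ _
  rw [Option.map_eq_none_iff]
  exact qfreeF_none_iff h i _

end Comp

section Equiv

variable {V : Type*} [NormedAddCommGroup V] [InnerProductSpace ℝ V] {ι : Type*}
  {S : QCSetting V ι} {Q : Type*} {𝒬 : QC S Q}

lemma hypoRel_refl (𝒬 : QC S Q) (u : FreeMonoid Q) : hypoRel 𝒬 u u :=
  ⟨{ toFun := id
     map_none := rfl
     wt_eq := fun x y hxy => by obtain rfl := Option.some.inj hxy; rfl
     eps_eq := fun i x y hxy => by obtain rfl := Option.some.inj hxy; rfl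
     phi_eq := fun i x y hxy => by obtain rfl := Option.some.inj hxy; rfl
     comm_e := fun i x x' y y' he hx hx' => by
       obtain rfl := Option.some.inj hx; obtain rfl := Option.some.inj hx'; exact he
     comm_f := fun i x x' y y' he hx hx' => by
       obtain rfl := Option.some.inj hx; obtain rfl := Option.some.inj hx'; exact he },
   Function.bijective_id, rfl⟩

lemma hypoRel_trans (𝒬 : QC S Q) {u v w : FreeMonoid Q}
    (h1 : hypoRel 𝒬 u v) (h2 : hypoRel 𝒬 v w) : hypoRel 𝒬 u w := by
  obtain ⟨ψ, hbij, hψ⟩ := h1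
  obtain ⟨χ, hbij', hχ⟩ := h2
  have key : ∀ x z, χ.toFun (ψ.toFun (some x)) = some z →
      ∃ y, ψ.toFun (some x) = some y ∧ χ.toFun (some y) = some z := by
    intro x z hxz
    cases hy : ψ.toFun (some x) with
    | none => rw [hy, χ.map_none] at hxz; exact absurd hxz (by simp)
    | some y => exact ⟨y, rfl, by rw [hy] at hxz; exact hxz⟩
  refine ⟨{ toFun := χ.toFun ∘ ψ.toFun
            map_none := by simp [ψ.map_none, χ.map_none]
            wt_eq := fun x z hxz => by
              obtain ⟨y, hy, hz⟩ := key x z hxz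
              rw [χ.wt_eq y z hz, ψ.wt_eq x y hy]
            eps_eq := fun i x z hxz => by
              obtain ⟨y, hy, hz⟩ := key x z hxz
              rw [χ.eps_eq i y z hz, ψ.eps_eq i x y hy]
            phi_eq := fun i x z hxz => by
              obtain ⟨y, hy, hz⟩ := key x z hxz
              rw [χ.phi_eq i y z hz, ψ.phi_eq i x y hy]
            comm_e := fun i x x' z z' he hx hx' => by
              obtain ⟨y, hy, hz⟩ := key x z hx
              obtain ⟨y', hy', hz'⟩ := key x' z' hx'
              exact χ.comm_e i y y' z z' (ψ.comm_e i x x' y y' he hy hy') hz hz'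
            comm_f := fun i x x' z z' he hx hx' => by
              obtain ⟨y, hy, hz⟩ := key x z hx
              obtain ⟨y', hy', hz'⟩ := key x' z' hx'
              exact χ.comm_f i y y' z z' (ψ.comm_f i x x' y y' he hy hy') hz hz' },
    by show Function.Bijective (χ.toFun ∘ ψ.toFun); exact Function.Bijective.comp hbij' hbij, ?_⟩
  show χ.toFun (ψ.toFun (some _)) = some _
  rw [hψ, hχ]

end Equiv

section Symm

variable {V : Type*} [NormedAddCommGroup V] [InnerProductSpace ℝ V] {ι : Type*}
  {S : QCSetting V ι} {Q : Type*} {𝒬 : QC S Q}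

lemma QCHom_inv (h : 𝒬.IsSeminormal) {u v : FreeMonoid Q}
    (ψ : QCHom ((freeQTensorQC 𝒬).compQC u) ((freeQTensorQC 𝒬).compQC v))
    (hbij : Function.Bijective ψ.toFun) :
    ∃ χ : QCHom ((freeQTensorQC 𝒬).compQC v) ((freeQTensorQC 𝒬).compQC u),
      (∀ o, χ.toFun (ψ.toFun o) = o) ∧ ∀ o, ψ.toFun (χ.toFun o) = o := by
  set E := Equiv.ofBijective ψ.toFun hbij with hE
  have hEapp : ∀ o, E o = ψ.toFun o := fun o => rfl
  have hEnone : E.symm none = none := by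
    apply E.injective
    rw [E.apply_symm_apply, hEapp, ψ.map_none]
  have hconv : ∀ o o', E.symm o = o' → ψ.toFun o' = o := by
    intro o o' ho
    rw [← ho, ← hEapp, E.apply_symm_apply]
  have hne : ∀ z : {w // (freeQTensorQC 𝒬).conn u w}, ∃ w, ψ.toFun (some z) = some w := by
    intro z
    cases hc : ψ.toFun (some z) with
    | none =>
        exfalso
        have := hbij.1 (hc.trans ψ.map_none.symm)
        simp at this
    | some w => exact ⟨w, rfl⟩
  refine ⟨{ toFun := E.symm
            map_none := hEnone
            wt_eq := fun x y hxy => (ψ.wt_eq y x (hconv _ _ hxy)).symm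
            eps_eq := fun i x y hxy => (ψ.eps_eq i y x (hconv _ _ hxy)).symm
            phi_eq := fun i x y hxy => (ψ.phi_eq i y x (hconv _ _ hxy)).symm
            comm_e := fun i x x' y y' hex hx hx' => by
              have hx2 : ψ.toFun (some y) = some x := hconv _ _ hx
              have hx2' : ψ.toFun (some y') = some x' := hconv _ _ hx'
              have hM : (freeQTensorQC 𝒬).e i x.1 = some x'.1 :=
                (compQC_e_some_iff i x x').mp hex
              have hεeq : (freeQTensorQC 𝒬).ε i x.1 = (freeQTensorQC 𝒬).ε i y.1 :=
                ψ.eps_eq i y x hx2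
              have hey : (freeQTensorQC 𝒬).e i y.1 ≠ none := by
                intro hc0
                have hc := (M_e_none_iff h i _).mp hc0
                have he2 : qfreeEps 𝒬 i (FreeMonoid.toList x.1) =
                    qfreeEps 𝒬 i (FreeMonoid.toList y.1) := hεeq
                have hc' : qfreeEps 𝒬 i (FreeMonoid.toList x.1) = 0 ∨
                    qfreeEps 𝒬 i (FreeMonoid.toList x.1) = ⊤ := by
                  rw [he2]; exact hc
                rw [(M_e_none_iff h i x.1).mpr hc'] at hM
                exact Option.noConfusion rfl (heq_of_eq hM)
              obtain ⟨z, hz⟩ := Option.ne_none_iff_exists'.mp hey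
              have hconnz : (freeQTensorQC 𝒬).conn u z :=
                Relation.EqvGen.trans _ _ _ y.2
                  (Relation.EqvGen.rel _ _ ⟨i, Or.inr (Or.inr (Or.inl hz))⟩)
              have hez : ((freeQTensorQC 𝒬).compQC u).e i y = some ⟨z, hconnz⟩ :=
                (compQC_e_some_iff i y ⟨z, hconnz⟩).mpr hz
              obtain ⟨w', hw'⟩ := hne ⟨z, hconnz⟩
              have hcomm := ψ.comm_e i y ⟨z, hconnz⟩ x w' hez hx2 hw'
              have hwx : w' = x' := Option.some.inj (hcomm.symm.trans hex)
              have hyz : some y' = some ⟨z, hconnz⟩ := hbij.1 (hx2'.trans ((hwx ▸ hw').symm))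
              rw [Option.some.inj hyz]
              exact hez
            comm_f := fun i x x' y y' hex hx hx' => by
              have hx2 : ψ.toFun (some y) = some x := hconv _ _ hx
              have hx2' : ψ.toFun (some y') = some x' := hconv _ _ hx'
              have hM : (freeQTensorQC 𝒬).f i x.1 = some x'.1 :=
                (compQC_f_some_iff i x x').mp hex
              have hεeq : (freeQTensorQC 𝒬).ε i x.1 = (freeQTensorQC 𝒬).ε i y.1 :=
                ψ.eps_eq i y x hx2
              have hφeq : (freeQTensorQC 𝒬).φ i x.1 = (freeQTensorQC 𝒬).φ i y.1 :=
                ψ.phi_eq i y x hx2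
              have hey : (freeQTensorQC 𝒬).f i y.1 ≠ none := by
                intro hc0
                have hc := (M_f_none_iff h i _).mp hc0
                have he2 : qfreeEps 𝒬 i (FreeMonoid.toList x.1) =
                    qfreeEps 𝒬 i (FreeMonoid.toList y.1) := hεeq
                have hp2 : qfreePhi 𝒬 i (FreeMonoid.toList x.1) =
                    qfreePhi 𝒬 i (FreeMonoid.toList y.1) := hφeq
                have hc' : qfreePhi 𝒬 i (FreeMonoid.toList x.1) = 0 ∨
                    qfreeEps 𝒬 i (FreeMonoid.toList x.1) = ⊤ := by
                  rw [hp2, he2]; exact hc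
                rw [(M_f_none_iff h i x.1).mpr hc'] at hM
                exact Option.noConfusion rfl (heq_of_eq hM)
              obtain ⟨z, hz⟩ := Option.ne_none_iff_exists'.mp hey
              have hconnz : (freeQTensorQC 𝒬).conn u z :=
                Relation.EqvGen.trans _ _ _ y.2
                  (Relation.EqvGen.rel _ _ ⟨i, Or.inl hz⟩)
              have hez : ((freeQTensorQC 𝒬).compQC u).f i y = some ⟨z, hconnz⟩ :=
                (compQC_f_some_iff i y ⟨z, hconnz⟩).mpr hz
              obtain ⟨w', hw'⟩ := hne ⟨z, hconnz⟩
              have hcomm := ψ.comm_f i y ⟨z, hconnz⟩ x w' hez hx2 hw'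
              have hwx : w' = x' := Option.some.inj (hcomm.symm.trans hex)
              have hyz : some y' = some ⟨z, hconnz⟩ := hbij.1 (hx2'.trans ((hwx ▸ hw').symm))
              rw [Option.some.inj hyz]
              exact hez },
    fun o => E.symm_apply_apply o, fun o => E.apply_symm_apply o⟩

lemma hypoRel_symm (h : 𝒬.IsSeminormal) {u v : FreeMonoid Q}
    (huv : hypoRel 𝒬 u v) : hypoRel 𝒬 v u := by
  obtain ⟨ψ, hbij, hψ⟩ := huv
  obtain ⟨χ, hl, hr⟩ := QCHom_inv h ψ hbij
  refine ⟨χ, Function.bijective_iff_has_inverse.mpr ⟨ψ.toFun, hr, hl⟩, ?_⟩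
  have := hl (some ⟨u, Relation.EqvGen.refl u⟩)
  rw [hψ] at this
  exact this

end Symm

section Mul

variable {V : Type*} [NormedAddCommGroup V] [InnerProductSpace ℝ V] {ι : Type*}
  {S : QCSetting V ι} {Q : Type*} {𝒬 : QC S Q}

lemma FM_eq_of_toList {a b : FreeMonoid Q}
    (hab : FreeMonoid.toList a = FreeMonoid.toList b) : a = b := by
  have := congrArg FreeMonoid.ofList hab
  rwa [FreeMonoid.ofList_toList, FreeMonoid.ofList_toList] at this

lemma conn_length (h : 𝒬.IsSeminormal) {w z : FreeMonoid Q}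
    (hc : (freeQTensorQC 𝒬).conn w z) :
    (FreeMonoid.toList z).length = (FreeMonoid.toList w).length := by
  induction hc with
  | rel x y hxy =>
      obtain ⟨i, hc | hc | hc | hc⟩ := hxy
      · exact qfreeF_length (h' := h) ((M_f_some_iff 𝒬 i _ _).mp hc)
      · exact (qfreeF_length (h' := h) ((M_f_some_iff 𝒬 i _ _).mp hc)).symm
      · exact qfreeE_length (h' := h) ((M_e_some_iff 𝒬 i _ _).mp hc)
      · exact (qfreeE_length (h' := h) ((M_e_some_iff 𝒬 i _ _).mp hc)).symm
  | refl x => rfl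
  | symm x y _ ih => exact ih.symm
  | trans x y z _ _ ih1 ih2 => exact ih2.trans ih1

lemma factor_uniq (h : 𝒬.IsSeminormal) {u : FreeMonoid Q} {a b c d : FreeMonoid Q}
    (hac : (freeQTensorQC 𝒬).conn u a) (hcc : (freeQTensorQC 𝒬).conn u c)
    (heq : a * b = c * d) : a = c ∧ b = d := by
  have hlen : (FreeMonoid.toList a).length = (FreeMonoid.toList c).length :=
    (conn_length h hac).trans (conn_length h hcc).symm
  have hl : FreeMonoid.toList a ++ FreeMonoid.toList b =
      FreeMonoid.toList c ++ FreeMonoid.toList d := by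
    rw [← FreeMonoid.toList_mul, ← FreeMonoid.toList_mul, heq]
  obtain ⟨h1, h2⟩ := List.append_inj hl hlen
  exact ⟨FM_eq_of_toList h1, FM_eq_of_toList h2⟩

/-- The product of the images of the factors is in the component of `v·v'`. -/
def QGood (𝒬 : QC S Q) (u u' v v' : FreeMonoid Q)
    (bar : {w // (freeQTensorQC 𝒬).conn u w} → {w // (freeQTensorQC 𝒬).conn v w})
    (bar' : {w // (freeQTensorQC 𝒬).conn u' w} → {w // (freeQTensorQC 𝒬).conn v' w})
    (z : FreeMonoid Q) : Prop :=
  ∃ (a b : FreeMonoid Q) (ha : (freeQTensorQC 𝒬).conn u a)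
    (hb : (freeQTensorQC 𝒬).conn u' b),
      z = a * b ∧
        (freeQTensorQC 𝒬).conn (v * v') ((bar ⟨a, ha⟩).1 * (bar' ⟨b, hb⟩).1)

/-- The compatibility conditions satisfied by a component isomorphism. -/
structure BarOK (𝒬 : QC S Q) (u v : FreeMonoid Q)
    (bar : {w // (freeQTensorQC 𝒬).conn u w} → {w // (freeQTensorQC 𝒬).conn v w}) : Prop where
  heps : ∀ (i : ι) (c : FreeMonoid Q) (hc : (freeQTensorQC 𝒬).conn u c),
    qfreeEps 𝒬 i (FreeMonoid.toList (bar ⟨c, hc⟩).1) = qfreeEps 𝒬 i (FreeMonoid.toList c)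
  hphi : ∀ (i : ι) (c : FreeMonoid Q) (hc : (freeQTensorQC 𝒬).conn u c),
    qfreePhi 𝒬 i (FreeMonoid.toList (bar ⟨c, hc⟩).1) = qfreePhi 𝒬 i (FreeMonoid.toList c)
  hwt : ∀ (c : FreeMonoid Q) (hc : (freeQTensorQC 𝒬).conn u c),
    freeWt 𝒬 (FreeMonoid.toList (bar ⟨c, hc⟩).1) = freeWt 𝒬 (FreeMonoid.toList c)
  hbe : ∀ (i : ι) (c c' : FreeMonoid Q) (hc : (freeQTensorQC 𝒬).conn u c)
    (hc' : (freeQTensorQC 𝒬).conn u c'),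
    (freeQTensorQC 𝒬).e i c = some c' →
      (freeQTensorQC 𝒬).e i (bar ⟨c, hc⟩).1 = some (bar ⟨c', hc'⟩).1
  hbf : ∀ (i : ι) (c c' : FreeMonoid Q) (hc : (freeQTensorQC 𝒬).conn u c)
    (hc' : (freeQTensorQC 𝒬).conn u c'),
    (freeQTensorQC 𝒬).f i c = some c' →
      (freeQTensorQC 𝒬).f i (bar ⟨c, hc⟩).1 = some (bar ⟨c', hc'⟩).1

lemma barOK_of_hom (𝒬 : QC S Q) {u v : FreeMonoid Q}
    (ψ : QCHom ((freeQTensorQC 𝒬).compQC u) ((freeQTensorQC 𝒬).compQC v))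
    (bar : {w // (freeQTensorQC 𝒬).conn u w} → {w // (freeQTensorQC 𝒬).conn v w})
    (hspec : ∀ z, ψ.toFun (some z) = some (bar z)) : BarOK 𝒬 u v bar where
  heps := fun i c hc => ψ.eps_eq i ⟨c, hc⟩ (bar ⟨c, hc⟩) (hspec _)
  hphi := fun i c hc => ψ.phi_eq i ⟨c, hc⟩ (bar ⟨c, hc⟩) (hspec _)
  hwt := fun c hc => ψ.wt_eq ⟨c, hc⟩ (bar ⟨c, hc⟩) (hspec _)
  hbe := fun i c c' hc hc' hec =>
    (compQC_e_some_iff i (bar ⟨c, hc⟩) (bar ⟨c', hc'⟩)).mp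
      (ψ.comm_e i ⟨c, hc⟩ ⟨c', hc'⟩ (bar _) (bar _)
        ((compQC_e_some_iff i ⟨c, hc⟩ ⟨c', hc'⟩).mpr hec) (hspec _) (hspec _))
  hbf := fun i c c' hc hc' hec =>
    (compQC_f_some_iff i (bar ⟨c, hc⟩) (bar ⟨c', hc'⟩)).mp
      (ψ.comm_f i ⟨c, hc⟩ ⟨c', hc'⟩ (bar _) (bar _)
        ((compQC_f_some_iff i ⟨c, hc⟩ ⟨c', hc'⟩).mpr hec) (hspec _) (hspec _))

end Mul

section Step

variable {V : Type*} [NormedAddCommGroup V] [InnerProductSpace ℝ V] {ι : Type*}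
  {S : QCSetting V ι} {Q : Type*} {𝒬 : QC S Q}

lemma QGood_step_fwd (h : 𝒬.IsSeminormal) {u u' v v' : FreeMonoid Q}
    {bar : {w // (freeQTensorQC 𝒬).conn u w} → {w // (freeQTensorQC 𝒬).conn v w}}
    {bar' : {w // (freeQTensorQC 𝒬).conn u' w} → {w // (freeQTensorQC 𝒬).conn v' w}}
    (hB : BarOK 𝒬 u v bar) (hB' : BarOK 𝒬 u' v' bar')
    {i : ι} {z w : FreeMonoid Q}
    (hedge : (freeQTensorQC 𝒬).f i z = some w ∨ (freeQTensorQC 𝒬).e i z = some w)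
    (hg : QGood 𝒬 u u' v v' bar bar' z) : QGood 𝒬 u u' v v' bar bar' w := by
  obtain ⟨a, b, ha, hbb, rfl, hcn⟩ := hg
  rcases hedge with hf | hf
  · have hflist : qfreeF 𝒬 i (FreeMonoid.toList a ++ FreeMonoid.toList b) =
        some (FreeMonoid.toList w) := by
      have := (M_f_some_iff 𝒬 i (a * b) w).mp hf
      rwa [FreeMonoid.toList_mul] at this
    rw [qfreeF_append h] at hflist
    split_ifs at hflist with hC hcmp
    · rcases Option.map_eq_some_iff.mp hflist with ⟨A', hfA, hwEq⟩
      have hfa : (freeQTensorQC 𝒬).f i a = some (FreeMonoid.ofList A') := by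
        apply (M_f_some_iff 𝒬 i a _).mpr
        rw [FreeMonoid.toList_ofList]
        exact hfA
      have ha' : (freeQTensorQC 𝒬).conn u (FreeMonoid.ofList A') :=
        Relation.EqvGen.trans _ _ _ ha (Relation.EqvGen.rel _ _ ⟨i, Or.inl hfa⟩)
      have hwfac : w = FreeMonoid.ofList A' * b := by
        apply FM_eq_of_toList
        rw [FreeMonoid.toList_mul, FreeMonoid.toList_ofList]
        exact hwEq.symm
      have hedge2 : (freeQTensorQC 𝒬).f i ((bar ⟨a, ha⟩).1 * (bar' ⟨b, hbb⟩).1) =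
          some ((bar ⟨FreeMonoid.ofList A', ha'⟩).1 * (bar' ⟨b, hbb⟩).1) := by
        apply (M_f_some_iff 𝒬 i _ _).mpr
        rw [FreeMonoid.toList_mul, FreeMonoid.toList_mul, qfreeF_append h,
          hB.hphi i a ha, hB'.heps i b hbb, if_neg hC, if_pos hcmp,
          (M_f_some_iff 𝒬 i _ _).mp (hB.hbf i a (FreeMonoid.ofList A') ha ha' hfa)]
        rfl
      exact ⟨FreeMonoid.ofList A', b, ha', hbb, hwfac,
        Relation.EqvGen.trans _ _ _ hcn (Relation.EqvGen.rel _ _ ⟨i, Or.inl hedge2⟩)⟩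
    · rcases Option.map_eq_some_iff.mp hflist with ⟨B', hfB, hwEq⟩
      have hfb : (freeQTensorQC 𝒬).f i b = some (FreeMonoid.ofList B') := by
        apply (M_f_some_iff 𝒬 i b _).mpr
        rw [FreeMonoid.toList_ofList]
        exact hfB
      have hb' : (freeQTensorQC 𝒬).conn u' (FreeMonoid.ofList B') :=
        Relation.EqvGen.trans _ _ _ hbb (Relation.EqvGen.rel _ _ ⟨i, Or.inl hfb⟩)
      have hwfac : w = a * FreeMonoid.ofList B' := by
        apply FM_eq_of_toList
        rw [FreeMonoid.toList_mul, FreeMonoid.toList_ofList]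
        exact hwEq.symm
      have hedge2 : (freeQTensorQC 𝒬).f i ((bar ⟨a, ha⟩).1 * (bar' ⟨b, hbb⟩).1) =
          some ((bar ⟨a, ha⟩).1 * (bar' ⟨FreeMonoid.ofList B', hb'⟩).1) := by
        apply (M_f_some_iff 𝒬 i _ _).mpr
        rw [FreeMonoid.toList_mul, FreeMonoid.toList_mul, qfreeF_append h,
          hB.hphi i a ha, hB'.heps i b hbb, if_neg hC, if_neg hcmp,
          (M_f_some_iff 𝒬 i _ _).mp (hB'.hbf i b (FreeMonoid.ofList B') hbb hb' hfb)]
        rfl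
      exact ⟨a, FreeMonoid.ofList B', ha, hb', hwfac,
        Relation.EqvGen.trans _ _ _ hcn (Relation.EqvGen.rel _ _ ⟨i, Or.inl hedge2⟩)⟩
  · have hflist : qfreeE 𝒬 i (FreeMonoid.toList a ++ FreeMonoid.toList b) =
        some (FreeMonoid.toList w) := by
      have := (M_e_some_iff 𝒬 i (a * b) w).mp hf
      rwa [FreeMonoid.toList_mul] at this
    rw [qfreeE_append h] at hflist
    split_ifs at hflist with hC hcmp
    · rcases Option.map_eq_some_iff.mp hflist with ⟨A', hfA, hwEq⟩
      have hfa : (freeQTensorQC 𝒬).e i a = some (FreeMonoid.ofList A') := by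
        apply (M_e_some_iff 𝒬 i a _).mpr
        rw [FreeMonoid.toList_ofList]
        exact hfA
      have ha' : (freeQTensorQC 𝒬).conn u (FreeMonoid.ofList A') :=
        Relation.EqvGen.trans _ _ _ ha
          (Relation.EqvGen.rel _ _ ⟨i, Or.inr (Or.inr (Or.inl hfa))⟩)
      have hwfac : w = FreeMonoid.ofList A' * b := by
        apply FM_eq_of_toList
        rw [FreeMonoid.toList_mul, FreeMonoid.toList_ofList]
        exact hwEq.symm
      have hedge2 : (freeQTensorQC 𝒬).e i ((bar ⟨a, ha⟩).1 * (bar' ⟨b, hbb⟩).1) =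
          some ((bar ⟨FreeMonoid.ofList A', ha'⟩).1 * (bar' ⟨b, hbb⟩).1) := by
        apply (M_e_some_iff 𝒬 i _ _).mpr
        rw [FreeMonoid.toList_mul, FreeMonoid.toList_mul, qfreeE_append h,
          hB.hphi i a ha, hB'.heps i b hbb, if_neg hC, if_pos hcmp,
          (M_e_some_iff 𝒬 i _ _).mp (hB.hbe i a (FreeMonoid.ofList A') ha ha' hfa)]
        rfl
      exact ⟨FreeMonoid.ofList A', b, ha', hbb, hwfac,
        Relation.EqvGen.trans _ _ _ hcn
          (Relation.EqvGen.rel _ _ ⟨i, Or.inr (Or.inr (Or.inl hedge2))⟩)⟩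
    · rcases Option.map_eq_some_iff.mp hflist with ⟨B', hfB, hwEq⟩
      have hfb : (freeQTensorQC 𝒬).e i b = some (FreeMonoid.ofList B') := by
        apply (M_e_some_iff 𝒬 i b _).mpr
        rw [FreeMonoid.toList_ofList]
        exact hfB
      have hb' : (freeQTensorQC 𝒬).conn u' (FreeMonoid.ofList B') :=
        Relation.EqvGen.trans _ _ _ hbb
          (Relation.EqvGen.rel _ _ ⟨i, Or.inr (Or.inr (Or.inl hfb))⟩)
      have hwfac : w = a * FreeMonoid.ofList B' := by
        apply FM_eq_of_toList
        rw [FreeMonoid.toList_mul, FreeMonoid.toList_ofList]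
        exact hwEq.symm
      have hedge2 : (freeQTensorQC 𝒬).e i ((bar ⟨a, ha⟩).1 * (bar' ⟨b, hbb⟩).1) =
          some ((bar ⟨a, ha⟩).1 * (bar' ⟨FreeMonoid.ofList B', hb'⟩).1) := by
        apply (M_e_some_iff 𝒬 i _ _).mpr
        rw [FreeMonoid.toList_mul, FreeMonoid.toList_mul, qfreeE_append h,
          hB.hphi i a ha, hB'.heps i b hbb, if_neg hC, if_neg hcmp,
          (M_e_some_iff 𝒬 i _ _).mp (hB'.hbe i b (FreeMonoid.ofList B') hbb hb' hfb)]
        rfl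
      exact ⟨a, FreeMonoid.ofList B', ha, hb', hwfac,
        Relation.EqvGen.trans _ _ _ hcn
          (Relation.EqvGen.rel _ _ ⟨i, Or.inr (Or.inr (Or.inl hedge2))⟩)⟩

end Step

section StepBwd

variable {V : Type*} [NormedAddCommGroup V] [InnerProductSpace ℝ V] {ι : Type*}
  {S : QCSetting V ι} {Q : Type*} {𝒬 : QC S Q}

lemma QGood_step_bwd (h : 𝒬.IsSeminormal) {u u' v v' : FreeMonoid Q}
    {bar : {w // (freeQTensorQC 𝒬).conn u w} → {w // (freeQTensorQC 𝒬).conn v w}}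
    {bar' : {w // (freeQTensorQC 𝒬).conn u' w} → {w // (freeQTensorQC 𝒬).conn v' w}}
    (hB : BarOK 𝒬 u v bar) (hB' : BarOK 𝒬 u' v' bar')
    {i : ι} {z w : FreeMonoid Q}
    (hedge : (freeQTensorQC 𝒬).f i z = some w ∨ (freeQTensorQC 𝒬).e i z = some w)
    (hg : QGood 𝒬 u u' v v' bar bar' w) : QGood 𝒬 u u' v v' bar bar' z := by
  obtain ⟨c, d, hc, hd, hwcd, hcn⟩ := hg
  subst hwcd
  have hzw : (FreeMonoid.toList (c * d)).length = (FreeMonoid.toList z).length := by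
    rcases hedge with hf | hf
    · exact qfreeF_length (h' := h) ((M_f_some_iff 𝒬 i _ _).mp hf)
    · exact qfreeE_length (h' := h) ((M_e_some_iff 𝒬 i _ _).mp hf)
  have hL : (FreeMonoid.toList c).length ≤ (FreeMonoid.toList z).length := by
    rw [← hzw, FreeMonoid.toList_mul, List.length_append]
    exact Nat.le_add_right _ _
  obtain ⟨a, hta⟩ : ∃ a' : FreeMonoid Q, FreeMonoid.toList a' =
      (FreeMonoid.toList z).take (FreeMonoid.toList c).length :=
    ⟨FreeMonoid.ofList _, FreeMonoid.toList_ofList _⟩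
  obtain ⟨b, htb⟩ : ∃ b' : FreeMonoid Q, FreeMonoid.toList b' =
      (FreeMonoid.toList z).drop (FreeMonoid.toList c).length :=
    ⟨FreeMonoid.ofList _, FreeMonoid.toList_ofList _⟩
  have hzab : z = a * b := by
    apply FM_eq_of_toList
    rw [FreeMonoid.toList_mul, hta, htb, List.take_append_drop]
  have hlena : (FreeMonoid.toList a).length = (FreeMonoid.toList c).length := by
    rw [hta, List.length_take]
    exact min_eq_left hL
  rcases hedge with hf | hf
  · have hflist : qfreeF 𝒬 i (FreeMonoid.toList a ++ FreeMonoid.toList b) =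
        some (FreeMonoid.toList c ++ FreeMonoid.toList d) := by
      have := (M_f_some_iff 𝒬 i z (c * d)).mp hf
      rw [hzab] at this
      rwa [FreeMonoid.toList_mul, FreeMonoid.toList_mul] at this
    rw [qfreeF_append h] at hflist
    split_ifs at hflist with hC hcmp
    · rcases Option.map_eq_some_iff.mp hflist with ⟨A', hfA, hwEq⟩
      have hlenA' : A'.length = (FreeMonoid.toList c).length :=
        (qfreeF_length (h' := h) hfA).trans hlena
      obtain ⟨hAc, hbd⟩ := List.append_inj hwEq hlenA'
      have hfa : (freeQTensorQC 𝒬).f i a = some c := by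
        apply (M_f_some_iff 𝒬 i a c).mpr
        rw [← hAc]
        exact hfA
      have hbd' : b = d := FM_eq_of_toList hbd
      subst hbd'
      have haz : (freeQTensorQC 𝒬).conn u a :=
        Relation.EqvGen.trans _ _ _ hc
          (Relation.EqvGen.symm _ _ (Relation.EqvGen.rel _ _ ⟨i, Or.inl hfa⟩))
      refine ⟨a, b, haz, hd, hzab, ?_⟩
      have hedge2 : (freeQTensorQC 𝒬).f i ((bar ⟨a, haz⟩).1 * (bar' ⟨b, hd⟩).1) =
          some ((bar ⟨c, hc⟩).1 * (bar' ⟨b, hd⟩).1) := by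
        apply (M_f_some_iff 𝒬 i _ _).mpr
        rw [FreeMonoid.toList_mul, FreeMonoid.toList_mul, qfreeF_append h,
          hB.hphi i a haz, hB'.heps i b hd, if_neg hC, if_pos hcmp,
          (M_f_some_iff 𝒬 i _ _).mp (hB.hbf i a c haz hc hfa)]
        rfl
      exact Relation.EqvGen.trans _ _ _ hcn
        (Relation.EqvGen.symm _ _ (Relation.EqvGen.rel _ _ ⟨i, Or.inl hedge2⟩))
    · rcases Option.map_eq_some_iff.mp hflist with ⟨B', hfB, hwEq⟩
      obtain ⟨hac, hBd⟩ := List.append_inj hwEq hlena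
      have hac' : a = c := FM_eq_of_toList hac
      have hfb : (freeQTensorQC 𝒬).f i b = some d := by
        apply (M_f_some_iff 𝒬 i b d).mpr
        rw [← hBd]
        exact hfB
      have hbz : (freeQTensorQC 𝒬).conn u' b :=
        Relation.EqvGen.trans _ _ _ hd
          (Relation.EqvGen.symm _ _ (Relation.EqvGen.rel _ _ ⟨i, Or.inl hfb⟩))
      subst hac'
      refine ⟨a, b, hc, hbz, hzab, ?_⟩
      have hedge2 : (freeQTensorQC 𝒬).f i ((bar ⟨a, hc⟩).1 * (bar' ⟨b, hbz⟩).1) =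
          some ((bar ⟨a, hc⟩).1 * (bar' ⟨d, hd⟩).1) := by
        apply (M_f_some_iff 𝒬 i _ _).mpr
        rw [FreeMonoid.toList_mul, FreeMonoid.toList_mul, qfreeF_append h,
          hB.hphi i a hc, hB'.heps i b hbz, if_neg hC, if_neg hcmp,
          (M_f_some_iff 𝒬 i _ _).mp (hB'.hbf i b d hbz hd hfb)]
        rfl
      exact Relation.EqvGen.trans _ _ _ hcn
        (Relation.EqvGen.symm _ _ (Relation.EqvGen.rel _ _ ⟨i, Or.inl hedge2⟩))
  · have hflist : qfreeE 𝒬 i (FreeMonoid.toList a ++ FreeMonoid.toList b) =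
        some (FreeMonoid.toList c ++ FreeMonoid.toList d) := by
      have := (M_e_some_iff 𝒬 i z (c * d)).mp hf
      rw [hzab] at this
      rwa [FreeMonoid.toList_mul, FreeMonoid.toList_mul] at this
    rw [qfreeE_append h] at hflist
    split_ifs at hflist with hC hcmp
    · rcases Option.map_eq_some_iff.mp hflist with ⟨A', hfA, hwEq⟩
      have hlenA' : A'.length = (FreeMonoid.toList c).length :=
        (qfreeE_length (h' := h) hfA).trans hlena
      obtain ⟨hAc, hbd⟩ := List.append_inj hwEq hlenA'
      have hfa : (freeQTensorQC 𝒬).e i a = some c := by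
        apply (M_e_some_iff 𝒬 i a c).mpr
        rw [← hAc]
        exact hfA
      have hbd' : b = d := FM_eq_of_toList hbd
      subst hbd'
      have haz : (freeQTensorQC 𝒬).conn u a :=
        Relation.EqvGen.trans _ _ _ hc
          (Relation.EqvGen.symm _ _
            (Relation.EqvGen.rel _ _ ⟨i, Or.inr (Or.inr (Or.inl hfa))⟩))
      refine ⟨a, b, haz, hd, hzab, ?_⟩
      have hedge2 : (freeQTensorQC 𝒬).e i ((bar ⟨a, haz⟩).1 * (bar' ⟨b, hd⟩).1) =
          some ((bar ⟨c, hc⟩).1 * (bar' ⟨b, hd⟩).1) := by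
        apply (M_e_some_iff 𝒬 i _ _).mpr
        rw [FreeMonoid.toList_mul, FreeMonoid.toList_mul, qfreeE_append h,
          hB.hphi i a haz, hB'.heps i b hd, if_neg hC, if_pos hcmp,
          (M_e_some_iff 𝒬 i _ _).mp (hB.hbe i a c haz hc hfa)]
        rfl
      exact Relation.EqvGen.trans _ _ _ hcn
        (Relation.EqvGen.symm _ _
          (Relation.EqvGen.rel _ _ ⟨i, Or.inr (Or.inr (Or.inl hedge2))⟩))
    · rcases Option.map_eq_some_iff.mp hflist with ⟨B', hfB, hwEq⟩
      obtain ⟨hac, hBd⟩ := List.append_inj hwEq hlena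
      have hac' : a = c := FM_eq_of_toList hac
      have hfb : (freeQTensorQC 𝒬).e i b = some d := by
        apply (M_e_some_iff 𝒬 i b d).mpr
        rw [← hBd]
        exact hfB
      have hbz : (freeQTensorQC 𝒬).conn u' b :=
        Relation.EqvGen.trans _ _ _ hd
          (Relation.EqvGen.symm _ _
            (Relation.EqvGen.rel _ _ ⟨i, Or.inr (Or.inr (Or.inl hfb))⟩))
      subst hac'
      refine ⟨a, b, hc, hbz, hzab, ?_⟩
      have hedge2 : (freeQTensorQC 𝒬).e i ((bar ⟨a, hc⟩).1 * (bar' ⟨b, hbz⟩).1) =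
          some ((bar ⟨a, hc⟩).1 * (bar' ⟨d, hd⟩).1) := by
        apply (M_e_some_iff 𝒬 i _ _).mpr
        rw [FreeMonoid.toList_mul, FreeMonoid.toList_mul, qfreeE_append h,
          hB.hphi i a hc, hB'.heps i b hbz, if_neg hC, if_neg hcmp,
          (M_e_some_iff 𝒬 i _ _).mp (hB'.hbe i b d hbz hd hfb)]
        rfl
      exact Relation.EqvGen.trans _ _ _ hcn
        (Relation.EqvGen.symm _ _
          (Relation.EqvGen.rel _ _ ⟨i, Or.inr (Or.inr (Or.inl hedge2))⟩))

lemma QGood_main (h : 𝒬.IsSeminormal) {u u' v v' : FreeMonoid Q}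
    {bar : {w // (freeQTensorQC 𝒬).conn u w} → {w // (freeQTensorQC 𝒬).conn v w}}
    {bar' : {w // (freeQTensorQC 𝒬).conn u' w} → {w // (freeQTensorQC 𝒬).conn v' w}}
    (hB : BarOK 𝒬 u v bar) (hB' : BarOK 𝒬 u' v' bar')
    (hbase : (freeQTensorQC 𝒬).conn (v * v')
      ((bar ⟨u, Relation.EqvGen.refl u⟩).1 * (bar' ⟨u', Relation.EqvGen.refl u'⟩).1))
    {z : FreeMonoid Q} (hz : (freeQTensorQC 𝒬).conn (u * u') z) :
    QGood 𝒬 u u' v v' bar bar' z := by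
  have key : ∀ p q, (freeQTensorQC 𝒬).conn p q →
      (QGood 𝒬 u u' v v' bar bar' p ↔ QGood 𝒬 u u' v v' bar bar' q) := by
    intro p q hpq
    induction hpq with
    | rel x y hxy =>
        obtain ⟨i, hc | hc | hc | hc⟩ := hxy
        · exact Iff.intro (QGood_step_fwd h hB hB' (Or.inl hc))
            (QGood_step_bwd h hB hB' (Or.inl hc))
        · exact Iff.intro (QGood_step_bwd h hB hB' (Or.inl hc))
            (QGood_step_fwd h hB hB' (Or.inl hc))
        · exact Iff.intro (QGood_step_fwd h hB hB' (Or.inr hc))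
            (QGood_step_bwd h hB hB' (Or.inr hc))
        · exact Iff.intro (QGood_step_bwd h hB hB' (Or.inr hc))
            (QGood_step_fwd h hB hB' (Or.inr hc))
    | refl x => exact Iff.rfl
    | symm x y _ ih => exact ih.symm
    | trans x y z _ _ ih1 ih2 => exact ih1.trans ih2
  exact (key _ _ hz).mp
    ⟨u, u', Relation.EqvGen.refl u, Relation.EqvGen.refl u', rfl, hbase⟩

end StepBwd

section Final

variable {V : Type*} [NormedAddCommGroup V] [InnerProductSpace ℝ V] {ι : Type*}
  {S : QCSetting V ι} {Q : Type*} {𝒬 : QC S Q}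

lemma hypoRel_mul (h : 𝒬.IsSeminormal) {u v u' v' : FreeMonoid Q}
    (h1 : hypoRel 𝒬 u v) (h2 : hypoRel 𝒬 u' v') : hypoRel 𝒬 (u * u') (v * v') := by
  obtain ⟨ψ, hbij, hψ⟩ := h1
  obtain ⟨ψ', hbij', hψ'⟩ := h2
  obtain ⟨χ, hχl, hχr⟩ := QCHom_inv h ψ hbij
  obtain ⟨χ', hχl', hχr'⟩ := QCHom_inv h ψ' hbij'
  have hne : ∀ (A B : FreeMonoid Q)
      (θ : QCHom ((freeQTensorQC 𝒬).compQC A) ((freeQTensorQC 𝒬).compQC B))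
      (hb : Function.Injective θ.toFun)
      (z : {w // (freeQTensorQC 𝒬).conn A w}), ∃ w', θ.toFun (some z) = some w' := by
    intro A B θ hbi z
    cases hcz : θ.toFun (some z) with
    | none => exact absurd (hbi (hcz.trans θ.map_none.symm)) (by simp)
    | some w' => exact ⟨w', rfl⟩
  have hχbij : Function.Bijective χ.toFun :=
    Function.bijective_iff_has_inverse.mpr ⟨ψ.toFun, hχr, hχl⟩
  have hχbij' : Function.Bijective χ'.toFun :=
    Function.bijective_iff_has_inverse.mpr ⟨ψ'.toFun, hχr', hχl'⟩
  choose bar hbar using hne u v ψ hbij.1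
  choose bar' hbar' using hne u' v' ψ' hbij'.1
  choose cbar hcbar using hne v u χ hχbij.1
  choose cbar' hcbar' using hne v' u' χ' hχbij'.1
  have hB := barOK_of_hom 𝒬 ψ bar hbar
  have hB' := barOK_of_hom 𝒬 ψ' bar' hbar'
  have hCo := barOK_of_hom 𝒬 χ cbar hcbar
  have hCo' := barOK_of_hom 𝒬 χ' cbar' hcbar'
  have hcb : ∀ z, cbar (bar z) = z := by
    intro z
    have h1' := hχl (some z)
    rw [hbar z] at h1'
    exact Option.some.inj ((hcbar (bar z)).symm.trans h1')
  have hcb' : ∀ z, cbar' (bar' z) = z := by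
    intro z
    have h1' := hχl' (some z)
    rw [hbar' z] at h1'
    exact Option.some.inj ((hcbar' (bar' z)).symm.trans h1')
  have hbc : ∀ z, bar (cbar z) = z := by
    intro z
    have h1' := hχr (some z)
    rw [hcbar z] at h1'
    exact Option.some.inj ((hbar (cbar z)).symm.trans h1')
  have hbc' : ∀ z, bar' (cbar' z) = z := by
    intro z
    have h1' := hχr' (some z)
    rw [hcbar' z] at h1'
    exact Option.some.inj ((hbar' (cbar' z)).symm.trans h1')
  have hbaru : bar ⟨u, Relation.EqvGen.refl u⟩ = ⟨v, Relation.EqvGen.refl v⟩ :=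
    Option.some.inj ((hbar _).symm.trans hψ)
  have hbaru' : bar' ⟨u', Relation.EqvGen.refl u'⟩ = ⟨v', Relation.EqvGen.refl v'⟩ :=
    Option.some.inj ((hbar' _).symm.trans hψ')
  have hcbarv : cbar ⟨v, Relation.EqvGen.refl v⟩ = ⟨u, Relation.EqvGen.refl u⟩ := by
    have hl := hχl (some ⟨u, Relation.EqvGen.refl u⟩)
    rw [hψ] at hl
    exact Option.some.inj ((hcbar _).symm.trans hl)
  have hcbarv' : cbar' ⟨v', Relation.EqvGen.refl v'⟩ = ⟨u', Relation.EqvGen.refl u'⟩ := by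
    have hl := hχl' (some ⟨u', Relation.EqvGen.refl u'⟩)
    rw [hψ'] at hl
    exact Option.some.inj ((hcbar' _).symm.trans hl)
  have hbase : (freeQTensorQC 𝒬).conn (v * v')
      ((bar ⟨u, Relation.EqvGen.refl u⟩).1 * (bar' ⟨u', Relation.EqvGen.refl u'⟩).1) := by
    rw [hbaru, hbaru']
    exact Relation.EqvGen.refl _
  have hbase2 : (freeQTensorQC 𝒬).conn (u * u')
      ((cbar ⟨v, Relation.EqvGen.refl v⟩).1 * (cbar' ⟨v', Relation.EqvGen.refl v'⟩).1) := by
    rw [hcbarv, hcbarv']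
    exact Relation.EqvGen.refl _
  have hmain : ∀ z : {w // (freeQTensorQC 𝒬).conn (u * u') w},
      ∃ (a b : FreeMonoid Q) (ha : (freeQTensorQC 𝒬).conn u a)
        (hb : (freeQTensorQC 𝒬).conn u' b),
          z.1 = a * b ∧ (freeQTensorQC 𝒬).conn (v * v')
            ((bar ⟨a, ha⟩).1 * (bar' ⟨b, hb⟩).1) :=
    fun z => QGood_main h hB hB' hbase z.2
  choose fa fb hfa hfb hfeq hfcn using hmain
  have hmain2 : ∀ z : {w // (freeQTensorQC 𝒬).conn (v * v') w},
      ∃ (a b : FreeMonoid Q) (ha : (freeQTensorQC 𝒬).conn v a)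
        (hb : (freeQTensorQC 𝒬).conn v' b),
          z.1 = a * b ∧ (freeQTensorQC 𝒬).conn (u * u')
            ((cbar ⟨a, ha⟩).1 * (cbar' ⟨b, hb⟩).1) :=
    fun z => QGood_main h hCo hCo' hbase2 z.2
  choose ga gb hga hgb hgeq hgcn using hmain2
  let F : {w // (freeQTensorQC 𝒬).conn (u * u') w} → {w // (freeQTensorQC 𝒬).conn (v * v') w} :=
    fun z => ⟨(bar ⟨fa z, hfa z⟩).1 * (bar' ⟨fb z, hfb z⟩).1, hfcn z⟩
  let G : {w // (freeQTensorQC 𝒬).conn (v * v') w} → {w // (freeQTensorQC 𝒬).conn (u * u') w} :=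
    fun z => ⟨(cbar ⟨ga z, hga z⟩).1 * (cbar' ⟨gb z, hgb z⟩).1, hgcn z⟩
  have hfuniq : ∀ (z : {w // (freeQTensorQC 𝒬).conn (u * u') w}) (c d : FreeMonoid Q)
      (hcc : (freeQTensorQC 𝒬).conn u c) (hdd : (freeQTensorQC 𝒬).conn u' d),
      z.1 = c * d → fa z = c ∧ fb z = d :=
    fun z c d hcc hdd hzcd => factor_uniq h (hfa z) hcc ((hfeq z).symm.trans hzcd)
  have hguniq : ∀ (z : {w // (freeQTensorQC 𝒬).conn (v * v') w}) (c d : FreeMonoid Q)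
      (hcc : (freeQTensorQC 𝒬).conn v c) (hdd : (freeQTensorQC 𝒬).conn v' d),
      z.1 = c * d → ga z = c ∧ gb z = d :=
    fun z c d hcc hdd hzcd => factor_uniq h (hga z) hcc ((hgeq z).symm.trans hzcd)
  have hGF : ∀ z, G (F z) = z := by
    intro z
    obtain ⟨hg1, hg2⟩ := hguniq (F z) (bar ⟨fa z, hfa z⟩).1 (bar' ⟨fb z, hfb z⟩).1
      (bar _).2 (bar' _).2 rfl
    apply Subtype.ext
    show (cbar ⟨ga (F z), hga (F z)⟩).1 * (cbar' ⟨gb (F z), hgb (F z)⟩).1 = z.1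
    have e1 : (⟨ga (F z), hga (F z)⟩ : {w // (freeQTensorQC 𝒬).conn v w}) =
        bar ⟨fa z, hfa z⟩ := Subtype.ext hg1
    have e2 : (⟨gb (F z), hgb (F z)⟩ : {w // (freeQTensorQC 𝒬).conn v' w}) =
        bar' ⟨fb z, hfb z⟩ := Subtype.ext hg2
    rw [e1, e2, hcb, hcb']
    exact (hfeq z).symm
  have hFG : ∀ z, F (G z) = z := by
    intro z
    obtain ⟨hg1, hg2⟩ := hfuniq (G z) (cbar ⟨ga z, hga z⟩).1 (cbar' ⟨gb z, hgb z⟩).1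
      (cbar _).2 (cbar' _).2 rfl
    apply Subtype.ext
    show (bar ⟨fa (G z), hfa (G z)⟩).1 * (bar' ⟨fb (G z), hfb (G z)⟩).1 = z.1
    have e1 : (⟨fa (G z), hfa (G z)⟩ : {w // (freeQTensorQC 𝒬).conn u w}) =
        cbar ⟨ga z, hga z⟩ := Subtype.ext hg1
    have e2 : (⟨fb (G z), hfb (G z)⟩ : {w // (freeQTensorQC 𝒬).conn u' w}) =
        cbar' ⟨gb z, hgb z⟩ := Subtype.ext hg2
    rw [e1, e2, hbc, hbc']
    exact (hgeq z).symm
  refine ⟨{ toFun := Option.map F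
            map_none := rfl
            wt_eq := fun x y hxy => by
              obtain rfl : F x = y := Option.some.inj hxy
              show freeWt 𝒬 (FreeMonoid.toList
                  ((bar ⟨fa x, hfa x⟩).1 * (bar' ⟨fb x, hfb x⟩).1)) =
                freeWt 𝒬 (FreeMonoid.toList x.1)
              rw [hfeq x, FreeMonoid.toList_mul, FreeMonoid.toList_mul, freeWt_append,
                freeWt_append, hB.hwt (fa x) (hfa x), hB'.hwt (fb x) (hfb x)]
            eps_eq := fun i x y hxy => by
              obtain rfl : F x = y := Option.some.inj hxy
              show qfreeEps 𝒬 i (FreeMonoid.toList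
                  ((bar ⟨fa x, hfa x⟩).1 * (bar' ⟨fb x, hfb x⟩).1)) =
                qfreeEps 𝒬 i (FreeMonoid.toList x.1)
              rw [hfeq x, FreeMonoid.toList_mul, FreeMonoid.toList_mul, qfreeEps_append h,
                qfreeEps_append h, hB.heps i (fa x) (hfa x), hB.hphi i (fa x) (hfa x),
                hB'.heps i (fb x) (hfb x), hB.hwt (fa x) (hfa x)]
            phi_eq := fun i x y hxy => by
              obtain rfl : F x = y := Option.some.inj hxy
              show qfreePhi 𝒬 i (FreeMonoid.toList
                  ((bar ⟨fa x, hfa x⟩).1 * (bar' ⟨fb x, hfb x⟩).1)) =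
                qfreePhi 𝒬 i (FreeMonoid.toList x.1)
              rw [hfeq x, FreeMonoid.toList_mul, FreeMonoid.toList_mul, qfreePhi_append h,
                qfreePhi_append h, hB.hphi i (fa x) (hfa x), hB'.hphi i (fb x) (hfb x),
                hB'.heps i (fb x) (hfb x), hB'.hwt (fb x) (hfb x)]
            comm_e := fun i x x' y y' hex hx hx' => by
              obtain rfl : F x = y := Option.some.inj hx
              obtain rfl : F x' = y' := Option.some.inj hx'
              apply (compQC_e_some_iff i (F x) (F x')).mpr
              have hMx : (freeQTensorQC 𝒬).e i x.1 = some x'.1 :=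
                (compQC_e_some_iff i x x').mp hex
              have hflist : qfreeE 𝒬 i (FreeMonoid.toList (fa x) ++ FreeMonoid.toList (fb x)) =
                  some (FreeMonoid.toList x'.1) := by
                have hq := (M_e_some_iff 𝒬 i x.1 x'.1).mp hMx
                rw [hfeq x] at hq
                rwa [FreeMonoid.toList_mul] at hq
              rw [qfreeE_append h] at hflist
              split_ifs at hflist with hCC hcmp
              · rcases Option.map_eq_some_iff.mp hflist with ⟨A', hfA, hwEq⟩
                have hfa2 : (freeQTensorQC 𝒬).e i (fa x) = some (FreeMonoid.ofList A') := by
                  apply (M_e_some_iff 𝒬 i _ _).mpr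
                  rw [FreeMonoid.toList_ofList]
                  exact hfA
                have ha' : (freeQTensorQC 𝒬).conn u (FreeMonoid.ofList A') :=
                  Relation.EqvGen.trans _ _ _ (hfa x)
                    (Relation.EqvGen.rel _ _ ⟨i, Or.inr (Or.inr (Or.inl hfa2))⟩)
                have hx'fac : x'.1 = FreeMonoid.ofList A' * fb x := by
                  apply FM_eq_of_toList
                  rw [FreeMonoid.toList_mul, FreeMonoid.toList_ofList]
                  exact hwEq.symm
                obtain ⟨hu1, hu2⟩ := hfuniq x' (FreeMonoid.ofList A') (fb x) ha' (hfb x) hx'fac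
                show (freeQTensorQC 𝒬).e i ((bar ⟨fa x, hfa x⟩).1 * (bar' ⟨fb x, hfb x⟩).1) =
                  some ((bar ⟨fa x', hfa x'⟩).1 * (bar' ⟨fb x', hfb x'⟩).1)
                have e1 : (⟨fa x', hfa x'⟩ : {w // (freeQTensorQC 𝒬).conn u w}) =
                    ⟨FreeMonoid.ofList A', ha'⟩ := Subtype.ext hu1
                have e2 : (⟨fb x', hfb x'⟩ : {w // (freeQTensorQC 𝒬).conn u' w}) =
                    ⟨fb x, hfb x⟩ := Subtype.ext hu2
                rw [e1, e2]
                apply (M_e_some_iff 𝒬 i _ _).mpr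
                rw [FreeMonoid.toList_mul, FreeMonoid.toList_mul, qfreeE_append h,
                  hB.hphi i (fa x) (hfa x), hB'.heps i (fb x) (hfb x), if_neg hCC,
                  if_pos hcmp,
                  (M_e_some_iff 𝒬 i _ _).mp (hB.hbe i (fa x) (FreeMonoid.ofList A')
                    (hfa x) ha' hfa2)]
                rfl
              · rcases Option.map_eq_some_iff.mp hflist with ⟨B', hfB, hwEq⟩
                have hfb2 : (freeQTensorQC 𝒬).e i (fb x) = some (FreeMonoid.ofList B') := by
                  apply (M_e_some_iff 𝒬 i _ _).mpr
                  rw [FreeMonoid.toList_ofList]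
                  exact hfB
                have hb2 : (freeQTensorQC 𝒬).conn u' (FreeMonoid.ofList B') :=
                  Relation.EqvGen.trans _ _ _ (hfb x)
                    (Relation.EqvGen.rel _ _ ⟨i, Or.inr (Or.inr (Or.inl hfb2))⟩)
                have hx'fac : x'.1 = fa x * FreeMonoid.ofList B' := by
                  apply FM_eq_of_toList
                  rw [FreeMonoid.toList_mul, FreeMonoid.toList_ofList]
                  exact hwEq.symm
                obtain ⟨hu1, hu2⟩ := hfuniq x' (fa x) (FreeMonoid.ofList B') (hfa x) hb2 hx'fac
                show (freeQTensorQC 𝒬).e i ((bar ⟨fa x, hfa x⟩).1 * (bar' ⟨fb x, hfb x⟩).1) =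
                  some ((bar ⟨fa x', hfa x'⟩).1 * (bar' ⟨fb x', hfb x'⟩).1)
                have e1 : (⟨fa x', hfa x'⟩ : {w // (freeQTensorQC 𝒬).conn u w}) =
                    ⟨fa x, hfa x⟩ := Subtype.ext hu1
                have e2 : (⟨fb x', hfb x'⟩ : {w // (freeQTensorQC 𝒬).conn u' w}) =
                    ⟨FreeMonoid.ofList B', hb2⟩ := Subtype.ext hu2
                rw [e1, e2]
                apply (M_e_some_iff 𝒬 i _ _).mpr
                rw [FreeMonoid.toList_mul, FreeMonoid.toList_mul, qfreeE_append h,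
                  hB.hphi i (fa x) (hfa x), hB'.heps i (fb x) (hfb x), if_neg hCC,
                  if_neg hcmp,
                  (M_e_some_iff 𝒬 i _ _).mp (hB'.hbe i (fb x) (FreeMonoid.ofList B')
                    (hfb x) hb2 hfb2)]
                rfl
            comm_f := fun i x x' y y' hex hx hx' => by
              obtain rfl : F x = y := Option.some.inj hx
              obtain rfl : F x' = y' := Option.some.inj hx'
              apply (compQC_f_some_iff i (F x) (F x')).mpr
              have hMx : (freeQTensorQC 𝒬).f i x.1 = some x'.1 :=
                (compQC_f_some_iff i x x').mp hex
              have hflist : qfreeF 𝒬 i (FreeMonoid.toList (fa x) ++ FreeMonoid.toList (fb x)) =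
                  some (FreeMonoid.toList x'.1) := by
                have hq := (M_f_some_iff 𝒬 i x.1 x'.1).mp hMx
                rw [hfeq x] at hq
                rwa [FreeMonoid.toList_mul] at hq
              rw [qfreeF_append h] at hflist
              split_ifs at hflist with hCC hcmp
              · rcases Option.map_eq_some_iff.mp hflist with ⟨A', hfA, hwEq⟩
                have hfa2 : (freeQTensorQC 𝒬).f i (fa x) = some (FreeMonoid.ofList A') := by
                  apply (M_f_some_iff 𝒬 i _ _).mpr
                  rw [FreeMonoid.toList_ofList]
                  exact hfA
                have ha' : (freeQTensorQC 𝒬).conn u (FreeMonoid.ofList A') :=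
                  Relation.EqvGen.trans _ _ _ (hfa x)
                    (Relation.EqvGen.rel _ _ ⟨i, Or.inl hfa2⟩)
                have hx'fac : x'.1 = FreeMonoid.ofList A' * fb x := by
                  apply FM_eq_of_toList
                  rw [FreeMonoid.toList_mul, FreeMonoid.toList_ofList]
                  exact hwEq.symm
                obtain ⟨hu1, hu2⟩ := hfuniq x' (FreeMonoid.ofList A') (fb x) ha' (hfb x) hx'fac
                show (freeQTensorQC 𝒬).f i ((bar ⟨fa x, hfa x⟩).1 * (bar' ⟨fb x, hfb x⟩).1) =
                  some ((bar ⟨fa x', hfa x'⟩).1 * (bar' ⟨fb x', hfb x'⟩).1)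
                have e1 : (⟨fa x', hfa x'⟩ : {w // (freeQTensorQC 𝒬).conn u w}) =
                    ⟨FreeMonoid.ofList A', ha'⟩ := Subtype.ext hu1
                have e2 : (⟨fb x', hfb x'⟩ : {w // (freeQTensorQC 𝒬).conn u' w}) =
                    ⟨fb x, hfb x⟩ := Subtype.ext hu2
                rw [e1, e2]
                apply (M_f_some_iff 𝒬 i _ _).mpr
                rw [FreeMonoid.toList_mul, FreeMonoid.toList_mul, qfreeF_append h,
                  hB.hphi i (fa x) (hfa x), hB'.heps i (fb x) (hfb x), if_neg hCC,
                  if_pos hcmp,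
                  (M_f_some_iff 𝒬 i _ _).mp (hB.hbf i (fa x) (FreeMonoid.ofList A')
                    (hfa x) ha' hfa2)]
                rfl
              · rcases Option.map_eq_some_iff.mp hflist with ⟨B', hfB, hwEq⟩
                have hfb2 : (freeQTensorQC 𝒬).f i (fb x) = some (FreeMonoid.ofList B') := by
                  apply (M_f_some_iff 𝒬 i _ _).mpr
                  rw [FreeMonoid.toList_ofList]
                  exact hfB
                have hb2 : (freeQTensorQC 𝒬).conn u' (FreeMonoid.ofList B') :=
                  Relation.EqvGen.trans _ _ _ (hfb x)
                    (Relation.EqvGen.rel _ _ ⟨i, Or.inl hfb2⟩)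
                have hx'fac : x'.1 = fa x * FreeMonoid.ofList B' := by
                  apply FM_eq_of_toList
                  rw [FreeMonoid.toList_mul, FreeMonoid.toList_ofList]
                  exact hwEq.symm
                obtain ⟨hu1, hu2⟩ := hfuniq x' (fa x) (FreeMonoid.ofList B') (hfa x) hb2 hx'fac
                show (freeQTensorQC 𝒬).f i ((bar ⟨fa x, hfa x⟩).1 * (bar' ⟨fb x, hfb x⟩).1) =
                  some ((bar ⟨fa x', hfa x'⟩).1 * (bar' ⟨fb x', hfb x'⟩).1)
                have e1 : (⟨fa x', hfa x'⟩ : {w // (freeQTensorQC 𝒬).conn u w}) =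
                    ⟨fa x, hfa x⟩ := Subtype.ext hu1
                have e2 : (⟨fb x', hfb x'⟩ : {w // (freeQTensorQC 𝒬).conn u' w}) =
                    ⟨FreeMonoid.ofList B', hb2⟩ := Subtype.ext hu2
                rw [e1, e2]
                apply (M_f_some_iff 𝒬 i _ _).mpr
                rw [FreeMonoid.toList_mul, FreeMonoid.toList_mul, qfreeF_append h,
                  hB.hphi i (fa x) (hfa x), hB'.heps i (fb x) (hfb x), if_neg hCC,
                  if_neg hcmp,
                  (M_f_some_iff 𝒬 i _ _).mp (hB'.hbf i (fb x) (FreeMonoid.ofList B')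
                    (hfb x) hb2 hfb2)]
                rfl },
    ?_, ?_⟩
  · show Function.Bijective (Option.map F)
    apply Function.bijective_iff_has_inverse.mpr
    refine ⟨Option.map G, ?_, ?_⟩
    · intro o
      cases o with
      | none => rfl
      | some z =>
          show some (G (F z)) = some z
          exact congrArg some (hGF z)
    · intro o
      cases o with
      | none => rfl
      | some z =>
          show some (F (G z)) = some z
          exact congrArg some (hFG z)
  · show Option.map F (some ⟨u * u', Relation.EqvGen.refl _⟩) = some ⟨v * v', _⟩
    apply congrArg some
    apply Subtype.ext
    obtain ⟨hu1, hu2⟩ := hfuniq ⟨u * u', Relation.EqvGen.refl _⟩ u u'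
      (Relation.EqvGen.refl u) (Relation.EqvGen.refl u') rfl
    show (bar ⟨fa _, hfa _⟩).1 * (bar' ⟨fb _, hfb _⟩).1 = v * v'
    have e1 : (⟨fa ⟨u * u', Relation.EqvGen.refl _⟩,
        hfa ⟨u * u', Relation.EqvGen.refl _⟩⟩ : {w // (freeQTensorQC 𝒬).conn u w}) =
        ⟨u, Relation.EqvGen.refl u⟩ := Subtype.ext hu1
    have e2 : (⟨fb ⟨u * u', Relation.EqvGen.refl _⟩,
        hfb ⟨u * u', Relation.EqvGen.refl _⟩⟩ : {w // (freeQTensorQC 𝒬).conn u' w}) =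
        ⟨u', Relation.EqvGen.refl u'⟩ := Subtype.ext hu2
    rw [e1, e2, hbaru, hbaru']

end Final


/-- The hypoplactic congruence `∼̈` on `F^⊗̈(Q)` is a monoid
congruence on the free monoid `Q*`: it is an equivalence relation, and it is compatible
with concatenation. -/
theorem hypoRel_isCongruence {V : Type*} [NormedAddCommGroup V]
    [InnerProductSpace ℝ V] {ι : Type*} {S : QCSetting V ι} {Q : Type*}
    (𝒬 : QC S Q) (h : 𝒬.IsSeminormal) :
    Equivalence (hypoRel 𝒬) ∧
    ∀ u v u' v' : FreeMonoid Q, hypoRel 𝒬 u v → hypoRel 𝒬 u' v' →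
      hypoRel 𝒬 (u * u') (v * v') := by
  exact ⟨⟨hypoRel_refl 𝒬, fun hxy => hypoRel_symm h hxy,
    fun hxy hyz => hypoRel_trans 𝒬 hxy hyz⟩,
    fun u v u' v' h1 h2 => hypoRel_mul h h1 h2⟩
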